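/- arXiv:1611.07576 — 4 statements merged into one kernel-verified Lean document; each statement's English description precedes it below -/
import Mathlib

section
/- For every integer ν ≥ 3, the real vector space of weighted homogeneous polynomials of weight ν in the variables (a,b,x) is the direct sum of the image of the Chern–Moser operator T_ν and the subspace N_ν spanned by the weight-ν monomials that are not non-normal. -/
/- Weights: a ↦ 2, b ↦ 1, x ↦ 1 (variables of `MvPolynomial (Fin 3) ℝ`, indices 0,1,2);
   for polynomials in (x,y) (`Fin 2`, indices 0,1): x ↦ 1, y ↦ 2;
   for polynomials in (a,b): a ↦ 2, b ↦ 1. -/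

open MvPolynomial

/-- weights on the variables (a, b, x) -/
noncomputable def wABX : Fin 3 → ℕ := ![2, 1, 1]
/-- weights on the variables (x, y) -/
noncomputable def wXY : Fin 2 → ℕ := ![1, 2]
/-- weights on the variables (a, b) -/
noncomputable def wAB : Fin 2 → ℕ := ![2, 1]

/-- The Chern–Moser operator:
`T(η,α,β,ξ)(a,b,x) = η(x, a+bx) − α(a,b) − x·β(a,b) − b·ξ(x, a+bx)`. -/
noncomputable def cmT (η α β ξ : MvPolynomial (Fin 2) ℝ) : MvPolynomial (Fin 3) ℝ :=
  aeval ![(X 2 : MvPolynomial (Fin 3) ℝ), X 0 + X 1 * X 2] η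
  - aeval ![(X 0 : MvPolynomial (Fin 3) ℝ), X 1] α
  - X 2 * aeval ![(X 0 : MvPolynomial (Fin 3) ℝ), X 1] β
  - X 1 * aeval ![(X 2 : MvPolynomial (Fin 3) ℝ), X 0 + X 1 * X 2] ξ

/-- A monomial `a^(d 0) b^(d 1) x^(d 2)` is non-normal if it is of one of the types
`a^i x^j`, `a^i b^j`, `a^i b x^j`, `a^i b^j x`, `a^i b^2 x^2`, `a^i b^2 x^3`,
`a^i b^3 x^2`, `a^i b^3 x^3`. -/
def NonNormal (d : Fin 3 →₀ ℕ) : Prop :=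
  d 1 = 0 ∨ d 2 = 0 ∨ d 1 = 1 ∨ d 2 = 1 ∨
    ((d 1 = 2 ∨ d 1 = 3) ∧ (d 2 = 2 ∨ d 2 = 3))

namespace CMaux

noncomputable def m2 (p l : ℕ) : Fin 2 →₀ ℕ := Finsupp.single 0 p + Finsupp.single 1 l
noncomputable def m3 (i j k : ℕ) : Fin 3 →₀ ℕ :=
  Finsupp.single 0 i + Finsupp.single 1 j + Finsupp.single 2 k

@[simp] lemma m2_0 (p l : ℕ) : m2 p l 0 = p := by simp [m2]
@[simp] lemma m2_1 (p l : ℕ) : m2 p l 1 = l := by simp [m2]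
@[simp] lemma m3_0 (i j k : ℕ) : m3 i j k 0 = i := by simp [m3]
@[simp] lemma m3_1 (i j k : ℕ) : m3 i j k 1 = j := by simp [m3]
@[simp] lemma m3_2 (i j k : ℕ) : m3 i j k 2 = k := by simp [m3]

lemma eq_m2 (u : Fin 2 →₀ ℕ) : u = m2 (u 0) (u 1) := by
  ext i; fin_cases i <;> simp [m2]

lemma eq_m3 (d : Fin 3 →₀ ℕ) : d = m3 (d 0) (d 1) (d 2) := by
  ext i; fin_cases i <;> simp [m3]

lemma m3_eq_iff {a b c i j k : ℕ} : m3 a b c = m3 i j k ↔ a = i ∧ b = j ∧ c = k := by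
  constructor
  · intro h
    refine ⟨?_, ?_, ?_⟩
    · have := congrArg (fun f => f 0) h; simpa [m3] using this
    · have := congrArg (fun f => f 1) h; simpa [m3] using this
    · have := congrArg (fun f => f 2) h; simpa [m3] using this
  · rintro ⟨rfl, rfl, rfl⟩; rfl

lemma m2_eq_iff {a b p l : ℕ} : m2 a b = m2 p l ↔ a = p ∧ b = l := by
  constructor
  · intro h
    constructor
    · have := congrArg (fun f => f 0) h; simpa [m2] using this
    · have := congrArg (fun f => f 1) h; simpa [m2] using this
  · rintro ⟨rfl, rfl⟩; rfl

lemma wsingle {n : ℕ} (w : Fin n → ℕ) (i : Fin n) (c : ℕ) :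
    (Finsupp.weight w) (Finsupp.single i c) = c * w i := by
  simp [Finsupp.weight, Finsupp.linearCombination_single, smul_eq_mul]

lemma weight_m2 (p l : ℕ) : (Finsupp.weight wXY) (m2 p l) = p + 2 * l := by
  simp [m2, map_add, wsingle, wXY]; ring

lemma weight_ab (i j : ℕ) : (Finsupp.weight wAB) (m2 i j) = 2 * i + j := by
  simp [m2, map_add, wsingle, wAB]; ring

lemma weight_m3 (i j k : ℕ) : (Finsupp.weight wABX) (m3 i j k) = 2*i + j + k := by
  simp [m3, map_add, wsingle, wABX]; ring

lemma monomial_single' {n : ℕ} (s : Fin n) (e : ℕ) (c : ℝ) :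
    (monomial (Finsupp.single s e) c : MvPolynomial (Fin n) ℝ) = C c * X s ^ e := by
  rw [X_pow_eq_monomial, C_mul_monomial, mul_one]

lemma monomial_m3 (i j k : ℕ) (c : ℝ) :
    (monomial (m3 i j k) c : MvPolynomial (Fin 3) ℝ) = C c * X 0 ^ i * X 1 ^ j * X 2 ^ k := by
  rw [show m3 i j k = Finsupp.single 0 i + (Finsupp.single 1 j + Finsupp.single 2 k) by
    simp [m3, add_assoc]]
  rw [monomial_single_add, monomial_single_add, monomial_single']
  ring

lemma monomial_m2 (p l : ℕ) (c : ℝ) :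
    (monomial (m2 p l) c : MvPolynomial (Fin 2) ℝ) = C c * X 0 ^ p * X 1 ^ l := by
  rw [show m2 p l = Finsupp.single 0 p + Finsupp.single 1 l from rfl]
  rw [monomial_single_add, monomial_single']
  ring

lemma subst_monomial (p l : ℕ) (c : ℝ) :
    aeval ![(X 2 : MvPolynomial (Fin 3) ℝ), X 0 + X 1 * X 2] (monomial (m2 p l) c)
      = ∑ m ∈ Finset.range (l+1),
          monomial (m3 m (l-m) (p + (l-m))) (c * ((l.choose m : ℕ) : ℝ)) := by
  rw [monomial_m2]
  simp only [map_mul, map_pow, aeval_C, aeval_X]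
  simp only [Matrix.cons_val_zero, Matrix.cons_val_one, Matrix.head_cons]
  rw [add_pow, Finset.mul_sum]
  refine Finset.sum_congr rfl fun m hm => ?_
  rw [monomial_m3, algebraMap_eq, C_mul,
    ← map_natCast (C : ℝ →+* MvPolynomial (Fin 3) ℝ) (l.choose m), mul_pow]
  ring

lemma coeff_subst_monomial (p l : ℕ) (c : ℝ) (i j k : ℕ) :
    coeff (m3 i j k) (aeval ![(X 2 : MvPolynomial (Fin 3) ℝ), X 0 + X 1 * X 2]
        (monomial (m2 p l) c))
      = if j ≤ k then (((i + j).choose j : ℕ) : ℝ) *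
          coeff (m2 (k - j) (i + j)) (monomial (m2 p l) c) else 0 := by
  rw [subst_monomial, MvPolynomial.coeff_sum]
  rw [Finset.sum_eq_single i]
  · rw [coeff_monomial, coeff_monomial]
    by_cases hil : i ≤ l
    · by_cases h1 : l - i = j ∧ p + (l - i) = k
      · rw [if_pos (m3_eq_iff.mpr ⟨rfl, h1.1, h1.2⟩)]
        have hj : j ≤ k := by omega
        have hl : l = i + j := by omega
        have hp : p = k - j := by omega
        rw [if_pos hj, if_pos (m2_eq_iff.mpr ⟨hp, hl⟩)]
        have : l.choose i = (i+j).choose j := by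
          rw [hl]
          have := Nat.choose_symm (n := i + j) (k := j) (by omega)
          simpa using this
        rw [this]; ring
      · rw [if_neg (fun h => h1 ⟨(m3_eq_iff.mp h).2.1, (m3_eq_iff.mp h).2.2⟩)]
        by_cases hj : j ≤ k
        · have hne : m2 p l ≠ m2 (k - j) (i + j) := by
            intro h
            have h2 := m2_eq_iff.mp h
            omega
          rw [if_pos hj, if_neg hne]
          ring
        · rw [if_neg hj]
    · have hc : l.choose i = 0 := Nat.choose_eq_zero_of_lt (by omega)
      by_cases hj : j ≤ k
      · have hne : m2 p l ≠ m2 (k - j) (i + j) := by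
          intro h
          have h2 := m2_eq_iff.mp h
          omega
        rw [if_pos hj, if_neg hne, hc]
        simp
      · rw [if_neg hj, hc]
        simp
  · intro m hm hmi
    rw [coeff_monomial, if_neg]
    intro h
    exact hmi (m3_eq_iff.mp h).1
  · intro hi
    simp only [Finset.mem_range, not_lt] at hi
    rw [coeff_monomial]
    have hc : l.choose i = 0 := Nat.choose_eq_zero_of_lt (by omega)
    rw [hc]
    simp

lemma coeff_subst (η : MvPolynomial (Fin 2) ℝ) (i j k : ℕ) :
    coeff (m3 i j k) (aeval ![(X 2 : MvPolynomial (Fin 3) ℝ), X 0 + X 1 * X 2] η)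
      = if j ≤ k then (((i + j).choose j : ℕ) : ℝ) * coeff (m2 (k - j) (i + j)) η else 0 := by
  induction η using MvPolynomial.induction_on' with
  | monomial u a =>
    rw [eq_m2 u]
    exact coeff_subst_monomial _ _ _ _ _ _
  | add p q hp hq =>
    rw [map_add, coeff_add, hp, hq, coeff_add]
    split_ifs
    · ring
    · simp

lemma coeff_ab (α : MvPolynomial (Fin 2) ℝ) (i j k : ℕ) :
    coeff (m3 i j k) (aeval ![(X 0 : MvPolynomial (Fin 3) ℝ), X 1] α)
      = if k = 0 then coeff (m2 i j) α else 0 := by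
  induction α using MvPolynomial.induction_on' with
  | monomial u a =>
    rw [eq_m2 u, monomial_m2]
    simp only [map_mul, map_pow, aeval_C, aeval_X, Matrix.cons_val_zero, Matrix.cons_val_one,
      Matrix.head_cons]
    rw [show (algebraMap ℝ (MvPolynomial (Fin 3) ℝ)) a * X 0 ^ (u 0) * X 1 ^ (u 1)
        = monomial (m3 (u 0) (u 1) 0) a by rw [monomial_m3, algebraMap_eq]; ring]
    rw [← monomial_m2 (u 0) (u 1) a, coeff_monomial, coeff_monomial]
    by_cases hk : k = 0
    · subst hk
      by_cases h : (u 0 : ℕ) = i ∧ (u 1 : ℕ) = j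
      · rw [if_pos (m3_eq_iff.mpr ⟨h.1, h.2, rfl⟩), if_pos rfl, if_pos (m2_eq_iff.mpr h)]
      · rw [if_neg (fun hh => h ⟨(m3_eq_iff.mp hh).1, (m3_eq_iff.mp hh).2.1⟩), if_pos rfl,
          if_neg (fun hh => h (m2_eq_iff.mp hh))]
    · rw [if_neg (fun hh => hk ((m3_eq_iff.mp hh).2.2).symm), if_neg hk]
  | add p q hp hq =>
    rw [map_add, coeff_add, hp, hq, coeff_add]
    split_ifs
    · ring
    · simp

lemma m3_sub1 (i j k : ℕ) : m3 i j k - Finsupp.single 1 1 = m3 i (j-1) k := by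
  ext r
  rw [Finsupp.tsub_apply]
  fin_cases r <;> simp [m3]

lemma m3_sub2 (i j k : ℕ) : m3 i j k - Finsupp.single 2 1 = m3 i j (k-1) := by
  ext r
  rw [Finsupp.tsub_apply]
  fin_cases r <;> simp [m3]

lemma m3_mem1 (i j k : ℕ) : (1 : Fin 3) ∈ (m3 i j k).support ↔ j ≠ 0 := by
  rw [Finsupp.mem_support_iff]
  simp [m3]

lemma m3_mem2 (i j k : ℕ) : (2 : Fin 3) ∈ (m3 i j k).support ↔ k ≠ 0 := by
  rw [Finsupp.mem_support_iff]
  simp [m3]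

/-- Master coefficient formula for the Chern–Moser operator. -/
lemma coeff_cmT (η α β ξ : MvPolynomial (Fin 2) ℝ) (i j k : ℕ) :
    coeff (m3 i j k) (cmT η α β ξ)
      = (if j ≤ k then (((i + j).choose j : ℕ) : ℝ) * coeff (m2 (k - j) (i + j)) η else 0)
        - (if k = 0 then coeff (m2 i j) α else 0)
        - (if k = 0 then 0 else if k - 1 = 0 then coeff (m2 i j) β else 0)
        - (if j = 0 then 0 else if j - 1 ≤ k then (((i + (j-1)).choose (j-1) : ℕ) : ℝ) *
            coeff (m2 (k - (j-1)) (i + (j-1))) ξ else 0) := by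
  rw [cmT, coeff_sub, coeff_sub, coeff_sub, coeff_subst, coeff_ab]
  congr 1
  congr 1
  · rw [mul_comm ((X 2 : MvPolynomial (Fin 3) ℝ)) _, coeff_mul_X']
    by_cases hk : k = 0
    · rw [if_neg (fun h => ((m3_mem2 i j k).mp h) hk), if_pos hk]
    · rw [if_pos ((m3_mem2 i j k).mpr hk), m3_sub2, coeff_ab, if_neg hk]
  · rw [mul_comm ((X 1 : MvPolynomial (Fin 3) ℝ)) _, coeff_mul_X']
    by_cases hj : j = 0
    · rw [if_neg (fun h => ((m3_mem1 i j k).mp h) hj), if_pos hj]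
    · rw [if_pos ((m3_mem1 i j k).mpr hj), m3_sub1, coeff_subst, if_neg hj]

lemma c2 (n : ℕ) : (((n+2).choose 2 : ℕ) : ℝ) = (n+2)*(n+1)/2 := by
  rw [Nat.choose_two_right]
  have h1 : (n+2) - 1 = n + 1 := by omega
  rw [h1]
  have hd : 2 ∣ (n+2)*(n+1) := by
    rcases Nat.even_mul_succ_self n with ⟨r, hr⟩
    refine ⟨n + 1 + r, ?_⟩
    have hx : (n+2)*(n+1) = n*(n+1) + 2*(n+1) := by ring
    omega
  rw [Nat.cast_div hd (by norm_num)]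
  push_cast
  ring

lemma c3 (n : ℕ) : (((n+3).choose 3 : ℕ) : ℝ) = (n+3)*(n+2)*(n+1)/6 := by
  have h' : ((n+3) * ((n+2).choose 2) : ℕ) = ((n+3).choose 3) * 3 := by
    simpa [Nat.succ_eq_add_one] using Nat.add_one_mul_choose_eq (n+2) 2
  have h2 := congrArg (fun x : ℕ => (x : ℝ)) h'
  push_cast at h2
  rw [c2] at h2
  linear_combination (-1/3 : ℝ) * h2

lemma uniq (η α β ξ : MvPolynomial (Fin 2) ℝ)
    (hz : ∀ i j k : ℕ, NonNormal (m3 i j k) → coeff (m3 i j k) (cmT η α β ξ) = 0) :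
    cmT η α β ξ = 0 := by
  have hE2 : ∀ p l : ℕ, 2 ≤ p → coeff (m2 p l) η = 0 := by
    intro p l hp
    have h := hz l 0 p (by simp [NonNormal])
    rw [coeff_cmT] at h
    simp only [if_pos (Nat.zero_le p), if_neg (show ¬ p = 0 by omega),
      if_neg (show ¬ p - 1 = 0 by omega), if_pos (rfl : (0:ℕ) = 0),
      Nat.add_zero, Nat.sub_zero, Nat.choose_zero_right, Nat.cast_one, one_mul,
      eq_self_iff_true, if_true, sub_zero] at h
    exact h
  have hX3 : ∀ p l : ℕ, 3 ≤ p → coeff (m2 p l) ξ = 0 := by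
    intro p l hp
    have h := hz l 1 p (Or.inr (Or.inr (by simp [NonNormal])))
    rw [coeff_cmT] at h
    simp only [if_pos (show (1:ℕ) ≤ p by omega), if_neg (show ¬ p = 0 by omega),
      if_neg (show ¬ p - 1 = 0 by omega), if_neg (show ¬ (1:ℕ) = 0 by omega),
      if_pos (show 1 - 1 ≤ p by omega)] at h
    simp only [show (1:ℕ) - 1 = 0 from rfl, Nat.add_zero, Nat.sub_zero,
      Nat.choose_zero_right, Nat.cast_one, one_mul, sub_zero] at h
    rw [hE2 (p-1) (l+1) (by omega)] at h
    simpa using h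
  have hX0 : ∀ m : ℕ, 2 ≤ m → coeff (m2 0 m) ξ = 0 := by
    intro m hm
    have h := hz (m-2) 3 2 (by simp [NonNormal])
    rw [coeff_cmT] at h
    simp only [if_neg (show ¬ (3:ℕ) ≤ 2 by omega), if_neg (show ¬ (2:ℕ) = 0 by omega),
      if_neg (show ¬ (2:ℕ) - 1 = 0 by omega), if_neg (show ¬ (3:ℕ) = 0 by omega),
      if_pos (show (3:ℕ) - 1 ≤ 2 by omega)] at h
    simp only [show (3:ℕ) - 1 = 2 from rfl, show (2:ℕ) - 2 = 0 from rfl] at h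
    have hme : m - 2 + 2 = m := by omega
    rw [hme] at h
    have hc : (((m).choose 2 : ℕ) : ℝ) ≠ 0 := by
      obtain ⟨r, rfl⟩ : ∃ r, m = r + 2 := ⟨m - 2, by omega⟩
      rw [c2]
      positivity
    have := h
    simp only [zero_sub, sub_zero, neg_eq_zero] at this
    rcases mul_eq_zero.mp this with hh | hh
    · exact absurd hh hc
    · exact hh
  have hE0X1 : ∀ m : ℕ, 3 ≤ m →
      coeff (m2 0 m) η = 0 ∧ coeff (m2 1 (m-1)) ξ = 0 := by
    intro m hm
    obtain ⟨r, rfl⟩ : ∃ r, m = r + 3 := ⟨m - 3, by omega⟩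
    have h22 := hz (r+1) 2 2 (by simp [NonNormal])
    have h33 := hz r 3 3 (by simp [NonNormal])
    rw [coeff_cmT] at h22 h33
    simp only [if_pos (le_refl (2:ℕ)), if_pos (le_refl (3:ℕ)),
      if_neg (show ¬ (2:ℕ) = 0 by omega), if_neg (show ¬ (2:ℕ) - 1 = 0 by omega),
      if_neg (show ¬ (3:ℕ) = 0 by omega), if_neg (show ¬ (3:ℕ) - 1 = 0 by omega),
      if_pos (show (2:ℕ) - 1 ≤ 2 by omega), if_pos (show (3:ℕ) - 1 ≤ 3 by omega)] at h22 h33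
    simp only [show (2:ℕ) - 2 = 0 from rfl, show (2:ℕ) - 1 = 1 from rfl,
      show (3:ℕ) - 3 = 0 from rfl, show (3:ℕ) - 1 = 2 from rfl,
      show (3:ℕ) - 2 = 1 from rfl, sub_zero] at h22 h33
    -- h22 : C(r+3,2) * ηc(0, r+3) - C(r+2,1) * ξc(1, r+2) = 0
    -- h33 : C(r+3,3) * ηc(0, r+3) - C(r+2,2) * ξc(1, r+2) = 0
    have e1 : r + 1 + 2 = r + 3 := by omega
    have e2 : r + 1 + 1 = r + 2 := by omega
    have e3 : (2:ℕ) - 1 = 1 := rfl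
    rw [e1, e2] at h22
    have hch1 : (((r+2).choose 1 : ℕ) : ℝ) = (r:ℝ) + 2 := by
      rw [Nat.choose_one_right]; push_cast; ring
    rw [hch1, c2] at h22
    rw [c3, c2] at h33
    push_cast at h22 h33
    have key : ((r:ℝ)+3)*((r:ℝ)+2)^2*((r:ℝ)+1)/12 * coeff (m2 0 (r+3)) η = 0 := by
      linear_combination (((r:ℝ)+2)*((r:ℝ)+1)/2) * h22 - ((r:ℝ)+2) * h33
    have hpos : ((r:ℝ)+3)*((r:ℝ)+2)^2*((r:ℝ)+1)/12 ≠ 0 := by positivity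
    have hu : coeff (m2 0 (r+3)) η = 0 := by
      rcases mul_eq_zero.mp key with hh | hh
      · exact absurd hh hpos
      · exact hh
    refine ⟨hu, ?_⟩
    rw [hu] at h22
    have hv : coeff (m2 1 (r+2)) ξ = 0 := by
      have hne : ((r:ℝ)+2) ≠ 0 := by positivity
      field_simp at h22
      have h22' : ((r:ℝ)+2) * coeff (m2 1 (r+2)) ξ = 0 := by linarith [h22]
      rcases mul_eq_zero.mp h22' with hh | hh
      · exact absurd hh hne
      · exact hh
    rw [show r + 3 - 1 = r + 2 by omega]
    exact hv
  have hE1X2 : ∀ m : ℕ, 2 ≤ m →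
      coeff (m2 1 m) η = 0 ∧ coeff (m2 2 (m-1)) ξ = 0 := by
    intro m hm
    obtain ⟨r, rfl⟩ : ∃ r, m = r + 2 := ⟨m - 2, by omega⟩
    have h12 := hz (r+1) 1 2 (Or.inr (Or.inr (by simp [NonNormal])))
    have h23 := hz r 2 3 (by simp [NonNormal])
    rw [coeff_cmT] at h12 h23
    simp only [if_pos (show (1:ℕ) ≤ 2 by omega), if_pos (show (2:ℕ) ≤ 3 by omega),
      if_neg (show ¬ (2:ℕ) = 0 by omega), if_neg (show ¬ (2:ℕ) - 1 = 0 by omega),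
      if_neg (show ¬ (3:ℕ) = 0 by omega), if_neg (show ¬ (3:ℕ) - 1 = 0 by omega),
      if_neg (show ¬ (1:ℕ) = 0 by omega),
      if_pos (show (1:ℕ) - 1 ≤ 2 by omega), if_pos (show (2:ℕ) - 1 ≤ 3 by omega)] at h12 h23
    simp only [show (2:ℕ) - 1 = 1 from rfl, show (1:ℕ) - 1 = 0 from rfl,
      show (3:ℕ) - 1 = 2 from rfl, show (3:ℕ) - 2 = 1 from rfl, show (2:ℕ) - 0 = 2 from rfl,
      Nat.add_zero, Nat.choose_zero_right, Nat.cast_one, one_mul, sub_zero] at h12 h23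
    -- h12 : C(r+2,1) * ηc(1, r+2) - ξc(2, r+1) = 0
    -- h23 : C(r+2,2) * ηc(1, r+2) - C(r+1,1) * ξc(2, r+1) = 0
    have e1 : r + 1 + 1 = r + 2 := by omega
    rw [e1] at h12
    have hch1 : (((r+2).choose 1 : ℕ) : ℝ) = (r:ℝ) + 2 := by
      rw [Nat.choose_one_right]; push_cast; ring
    have hch2 : (((r+1).choose 1 : ℕ) : ℝ) = (r:ℝ) + 1 := by
      rw [Nat.choose_one_right]; push_cast; ring
    rw [hch1] at h12
    rw [c2, hch2] at h23
    push_cast at h12 h23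
    have key : ((r:ℝ)+2)*((r:ℝ)+1)/2 * coeff (m2 1 (r+2)) η = 0 := by
      linear_combination ((r:ℝ)+1) * h12 - h23
    have hpos : ((r:ℝ)+2)*((r:ℝ)+1)/2 ≠ 0 := by positivity
    have hu : coeff (m2 1 (r+2)) η = 0 := by
      rcases mul_eq_zero.mp key with hh | hh
      · exact absurd hh hpos
      · exact hh
    refine ⟨hu, ?_⟩
    rw [hu] at h12
    rw [show r + 2 - 1 = r + 1 by omega]
    linarith [h12]
  -- now conclude
  apply MvPolynomial.ext
  intro d
  rw [coeff_zero, eq_m3 d]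
  set i := d 0; set j := d 1; set k := d 2
  by_cases hnn : NonNormal (m3 i j k)
  · exact hz i j k hnn
  · simp only [NonNormal, m3_0, m3_1, m3_2] at hnn
    push_neg at hnn
    have hj2 : 2 ≤ j := by omega
    have hk2 : 2 ≤ k := by omega
    rw [coeff_cmT]
    rw [if_neg (show ¬ k = 0 by omega), if_neg (show ¬ k = 0 by omega),
      if_neg (show ¬ k - 1 = 0 by omega), if_neg (show ¬ j = 0 by omega)]
    have hterm1 : (if j ≤ k then (((i + j).choose j : ℕ) : ℝ) * coeff (m2 (k - j) (i + j)) η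
        else 0) = 0 := by
      by_cases hjk : j ≤ k
      · rw [if_pos hjk]
        rcases (show k - j = 0 ∨ k - j = 1 ∨ 2 ≤ k - j by omega) with h0 | h1 | h2
        · -- k = j, so j = k ≥ 4
          have hj4 : 4 ≤ j := by
            rcases hnn with ⟨-, -, -, -, hp⟩
            omega
          rw [h0, (hE0X1 (i+j) (by omega)).1, mul_zero]
        · -- k = j + 1, so j ≥ 3
          have hj3 : 3 ≤ j := by
            rcases hnn with ⟨-, -, -, -, hp⟩
            omega
          rw [h1, (hE1X2 (i+j) (by omega)).1, mul_zero]
        · rw [hE2 (k-j) (i+j) h2, mul_zero]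
      · rw [if_neg hjk]
    have hterm2 : (if j - 1 ≤ k then (((i + (j-1)).choose (j-1) : ℕ) : ℝ) *
        coeff (m2 (k - (j-1)) (i + (j-1))) ξ else 0) = 0 := by
      by_cases hjk : j - 1 ≤ k
      · rw [if_pos hjk]
        rcases (show k - (j-1) = 0 ∨ k - (j-1) = 1 ∨ k - (j-1) = 2 ∨ 3 ≤ k - (j-1) by omega)
          with h0 | h1 | h2 | h3
        · -- k = j - 1 : j ≥ 4
          have hj4 : 4 ≤ j := by
            rcases hnn with ⟨-, -, -, -, hp⟩
            omega
          rw [h0, hX0 (i + (j-1)) (by omega), mul_zero]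
        · -- k = j : j ≥ 4
          have hj4 : 4 ≤ j := by
            rcases hnn with ⟨-, -, -, -, hp⟩
            omega
          have : i + (j - 1) = (i + j) - 1 := by omega
          rw [h1, this, (hE0X1 (i+j) (by omega)).2, mul_zero]
        · -- k = j + 1 : j ≥ 3
          have hj3 : 3 ≤ j := by
            rcases hnn with ⟨-, -, -, -, hp⟩
            omega
          have : i + (j - 1) = (i + j) - 1 := by omega
          rw [h2, this, (hE1X2 (i+j) (by omega)).2, mul_zero]
        · rw [hX3 (k - (j-1)) (i + (j-1)) h3, mul_zero]
      · rw [if_neg hjk]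
    rw [hterm1, hterm2]
    ring

noncomputable def rowX (c : ℕ → ℝ) (μ : ℕ) : MvPolynomial (Fin 2) ℝ :=
  ∑ p ∈ Finset.range (μ+1), if (μ - p) % 2 = 0 then monomial (m2 p ((μ-p)/2)) (c p) else 0

lemma rowX_coeff (c : ℕ → ℝ) (μ p l : ℕ) :
    coeff (m2 p l) (rowX c μ) = if p + 2*l = μ then c p else 0 := by
  rw [rowX, MvPolynomial.coeff_sum]
  by_cases hp : p ≤ μ
  · rw [Finset.sum_eq_single_of_mem p (Finset.mem_range.mpr (by omega))]
    · split_ifs with h1 h2 h2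
      · rw [coeff_monomial, if_pos (m2_eq_iff.mpr ⟨rfl, by omega⟩)]
      · rw [coeff_monomial, if_neg (fun hh => by have := (m2_eq_iff.mp hh).2; omega)]
      · omega
      · rw [coeff_zero]
    · intro q hq hqp
      split_ifs with h1
      · rw [coeff_monomial, if_neg (fun hh => hqp (m2_eq_iff.mp hh).1)]
      · rw [coeff_zero]
  · rw [if_neg (by omega), Finset.sum_eq_zero]
    intro q hq
    have hq' := Finset.mem_range.mp hq
    split_ifs with h1
    · rw [coeff_monomial, if_neg (fun hh => by have := (m2_eq_iff.mp hh).1; omega)]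
    · rw [coeff_zero]

lemma rowX_hom (c : ℕ → ℝ) (μ : ℕ) : (rowX c μ).IsWeightedHomogeneous wXY μ := by
  rw [← mem_weightedHomogeneousSubmodule]
  apply Submodule.sum_mem
  intro p hp
  split_ifs with h
  · rw [mem_weightedHomogeneousSubmodule]
    apply isWeightedHomogeneous_monomial
    rw [weight_m2]
    have := Finset.mem_range.mp hp
    omega
  · exact Submodule.zero_mem _

noncomputable def rowAB (c : ℕ → ℝ) (μ : ℕ) : MvPolynomial (Fin 2) ℝ :=
  ∑ j ∈ Finset.range (μ+1), if (μ - j) % 2 = 0 then monomial (m2 ((μ-j)/2) j) (c j) else 0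

lemma rowAB_coeff (c : ℕ → ℝ) (μ i j : ℕ) :
    coeff (m2 i j) (rowAB c μ) = if 2*i + j = μ then c j else 0 := by
  rw [rowAB, MvPolynomial.coeff_sum]
  by_cases hp : j ≤ μ
  · rw [Finset.sum_eq_single_of_mem j (Finset.mem_range.mpr (by omega))]
    · split_ifs with h1 h2 h2
      · rw [coeff_monomial, if_pos (m2_eq_iff.mpr ⟨by omega, rfl⟩)]
      · rw [coeff_monomial, if_neg (fun hh => by have := (m2_eq_iff.mp hh).1; omega)]
      · omega
      · rw [coeff_zero]
    · intro q hq hqp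
      split_ifs with h1
      · rw [coeff_monomial, if_neg (fun hh => hqp (m2_eq_iff.mp hh).2)]
      · rw [coeff_zero]
  · rw [if_neg (by omega), Finset.sum_eq_zero]
    intro q hq
    have hq' := Finset.mem_range.mp hq
    split_ifs with h1
    · rw [coeff_monomial, if_neg (fun hh => by have := (m2_eq_iff.mp hh).2; omega)]
    · rw [coeff_zero]

lemma rowAB_hom (c : ℕ → ℝ) (μ : ℕ) : (rowAB c μ).IsWeightedHomogeneous wAB μ := by
  rw [← mem_weightedHomogeneousSubmodule]
  apply Submodule.sum_mem
  intro p hp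
  split_ifs with h
  · rw [mem_weightedHomogeneousSubmodule]
    apply isWeightedHomogeneous_monomial
    rw [weight_ab]
    have := Finset.mem_range.mp hp
    omega
  · exact Submodule.zero_mem _

/-- `cmT` maps homogeneous quadruples to homogeneous polynomials. -/
lemma cmT_hom (ν : ℕ) (hν : 1 ≤ ν) (η α β ξ : MvPolynomial (Fin 2) ℝ)
    (hη : η.IsWeightedHomogeneous wXY ν) (hα : α.IsWeightedHomogeneous wAB ν)
    (hβ : β.IsWeightedHomogeneous wAB (ν - 1)) (hξ : ξ.IsWeightedHomogeneous wXY (ν - 1)) :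
    (cmT η α β ξ).IsWeightedHomogeneous wABX ν := by
  intro d hd
  rw [eq_m3 d] at hd
  rw [eq_m3 d, weight_m3]
  set i := d 0; set j := d 1; set k := d 2
  by_contra hne
  apply hd
  rw [coeff_cmT]
  have h1 : (if j ≤ k then (((i + j).choose j : ℕ) : ℝ) * coeff (m2 (k - j) (i + j)) η
      else 0) = 0 := by
    split_ifs with h
    · by_cases hc : coeff (m2 (k - j) (i + j)) η = 0
      · rw [hc, mul_zero]
      · have := hη hc
        rw [weight_m2] at this
        omega
    · rfl
  have h2 : (if k = 0 then coeff (m2 i j) α else 0) = 0 := by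
    split_ifs with h
    · by_cases hc : coeff (m2 i j) α = 0
      · exact hc
      · have := hα hc
        rw [weight_ab] at this
        omega
    · rfl
  have h3 : (if k = 0 then 0 else if k - 1 = 0 then coeff (m2 i j) β else 0) = 0 := by
    split_ifs with h h'
    · rfl
    · by_cases hc : coeff (m2 i j) β = 0
      · exact hc
      · have := hβ hc
        rw [weight_ab] at this
        omega
    · rfl
  have h4 : (if j = 0 then 0 else if j - 1 ≤ k then (((i + (j-1)).choose (j-1) : ℕ) : ℝ) *
      coeff (m2 (k - (j-1)) (i + (j-1))) ξ else 0) = 0 := by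
    split_ifs with h h'
    · rfl
    · by_cases hc : coeff (m2 (k - (j-1)) (i + (j-1))) ξ = 0
      · rw [hc, mul_zero]
      · have := hξ hc
        rw [weight_m2] at this
        omega
    · rfl
  rw [h1, h2, h3, h4]
  ring

noncomputable def pc (P : MvPolynomial (Fin 3) ℝ) (i j k : ℕ) : ℝ := coeff (m3 i j k) P

noncomputable def EC (ν : ℕ) (P : MvPolynomial (Fin 3) ℝ) : ℕ → ℝ := fun p =>
  if 2 ≤ p then pc P ((ν - p) / 2) 0 p
  else if p = 1 then
    (if 2 ≤ (ν - 1) / 2 then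
      (2 * ((((ν - 1) / 2 : ℕ) : ℝ) - 1) * pc P ((ν - 1) / 2 - 1) 1 2
        - 2 * pc P ((ν - 1) / 2 - 2) 2 3)
        / ((((ν - 1) / 2 : ℕ) : ℝ) * ((((ν - 1) / 2 : ℕ) : ℝ) - 1))
    else 0)
  else
    (if 3 ≤ ν / 2 then
      (6 * (((ν / 2 : ℕ) : ℝ) - 2) * pc P (ν / 2 - 2) 2 2 - 12 * pc P (ν / 2 - 3) 3 3)
        / (((ν / 2 : ℕ) : ℝ) * (((ν / 2 : ℕ) : ℝ) - 1) * (((ν / 2 : ℕ) : ℝ) - 2))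
    else 0)

noncomputable def XC (ν : ℕ) (P : MvPolynomial (Fin 3) ℝ) : ℕ → ℝ := fun p =>
  if 2 ≤ p then ((((ν - 1 - p) / 2 : ℕ) : ℝ) + 1) * EC ν P (p - 1) - pc P ((ν - 1 - p) / 2) 1 p
  else if p = 1 then
    (if 2 ≤ ν / 2 then
      (((ν / 2 : ℕ) : ℝ) * (((ν / 2 : ℕ) : ℝ) - 1) / 2 * EC ν P 0 - pc P (ν / 2 - 2) 2 2)
        / ((((ν / 2) : ℕ) : ℝ) - 1)
    else 0)
  else
    (if 2 ≤ (ν - 1) / 2 then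
      - pc P ((ν - 1) / 2 - 2) 3 2
        / (((((ν - 1) / 2) : ℕ) : ℝ) * ((((( ν - 1) / 2) : ℕ) : ℝ) - 1) / 2)
    else 0)

noncomputable def AC (ν : ℕ) (P : MvPolynomial (Fin 3) ℝ) : ℕ → ℝ := fun j =>
  if 2 ≤ j then - pc P ((ν - j) / 2) j 0
  else if j = 1 then - XC ν P 0 - pc P ((ν - 1) / 2) 1 0
  else EC ν P 0 - pc P (ν / 2) 0 0

noncomputable def BC (ν : ℕ) (P : MvPolynomial (Fin 3) ℝ) : ℕ → ℝ := fun j =>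
  if 3 ≤ j then - pc P ((ν - 1 - j) / 2) j 1
  else if j = 2 then - ((((ν - 1) / 2 : ℕ) : ℝ)) * XC ν P 0 - pc P ((ν - 3) / 2) 2 1
  else if j = 1 then ((ν / 2 : ℕ) : ℝ) * EC ν P 0 - XC ν P 1 - pc P (ν / 2 - 1) 1 1
  else EC ν P 1 - pc P ((ν - 1) / 2) 0 1

lemma exist_key (ν : ℕ) (hν : 3 ≤ ν) (P : MvPolynomial (Fin 3) ℝ) (i j k : ℕ)
    (hw : 2*i + j + k = ν) (hnn : NonNormal (m3 i j k)) :
    coeff (m3 i j k) (cmT (rowX (EC ν P) ν) (rowAB (AC ν P) ν)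
      (rowAB (BC ν P) (ν-1)) (rowX (XC ν P) (ν-1))) = coeff (m3 i j k) P := by
  have h0i : (0:ℝ) ≤ (i:ℝ) := Nat.cast_nonneg i
  rw [coeff_cmT]
  rcases (show j = 0 ∨ j = 1 ∨ 2 ≤ j by omega) with hj | hj | hj2
  · -- j = 0
    subst hj
    rw [if_pos (Nat.zero_le k)]
    norm_num
    rw [rowX_coeff (EC ν P) ν k i, if_pos (show k + 2*i = ν by omega)]
    rcases (show k = 0 ∨ k = 1 ∨ 2 ≤ k by omega) with hk | hk | hk
    · subst hk
      norm_num
      rw [rowAB_coeff (AC ν P) ν i 0, if_pos (show 2*i + 0 = ν by omega)]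
      simp only [AC]
      norm_num
      rw [show ν / 2 = i by omega]
      simp only [pc]
    · subst hk
      norm_num
      rw [rowAB_coeff (BC ν P) (ν-1) i 0, if_pos (show 2*i + 0 = ν - 1 by omega)]
      simp only [BC]
      norm_num
      rw [show (ν - 1) / 2 = i by omega]
      simp only [pc]
    · rw [if_neg (show ¬ k = 0 by omega), if_neg (show ¬ k = 0 by omega),
        if_neg (show ¬ k - 1 = 0 by omega)]
      norm_num
      simp only [EC]
      rw [if_pos hk, show (ν - k) / 2 = i by omega]
      simp only [pc]
  · -- j = 1
    subst hj
    rw [if_neg (by norm_num : ¬ (1:ℕ) = 0), if_pos (show 1 - 1 ≤ k by omega)]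
    norm_num
    rw [rowX_coeff (XC ν P) (ν-1) k i, if_pos (show k + 2*i = ν - 1 by omega)]
    rcases (show k = 0 ∨ k = 1 ∨ 2 ≤ k by omega) with hk | hk | hk
    · subst hk
      norm_num
      rw [rowAB_coeff (AC ν P) ν i 1, if_pos (show 2*i + 1 = ν by omega)]
      simp only [AC]
      norm_num
      rw [show (ν - 1) / 2 = i by omega]
      simp only [pc]
    · subst hk
      norm_num
      rw [rowX_coeff (EC ν P) ν 0 (i+1), if_pos (show 0 + 2*(i+1) = ν by omega)]
      rw [rowAB_coeff (BC ν P) (ν-1) i 1, if_pos (show 2*i + 1 = ν - 1 by omega)]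
      simp only [BC]
      norm_num
      rw [show ν / 2 = i + 1 by omega, show i + 1 - 1 = i by omega]
      simp only [pc]
      push_cast
      ring
    · rw [if_pos (show (1:ℕ) ≤ k by omega)]
      rw [rowX_coeff (EC ν P) ν (k-1) (i+1), if_pos (show (k-1) + 2*(i+1) = ν by omega)]
      rw [if_neg (show ¬ k = 0 by omega), if_neg (show ¬ k = 0 by omega),
        if_neg (show ¬ k - 1 = 0 by omega)]
      simp only [XC]
      rw [if_pos hk, show (ν - 1 - k) / 2 = i by omega]
      simp only [pc]
      push_cast
      ring
  · -- 2 ≤ j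
    rcases (show k = 0 ∨ k = 1 ∨ 2 ≤ k by omega) with hk | hk | hk
    · subst hk
      rw [if_neg (show ¬ j ≤ 0 by omega), if_neg (show ¬ j = 0 by omega),
        if_neg (show ¬ j - 1 ≤ 0 by omega)]
      norm_num
      rw [rowAB_coeff (AC ν P) ν i j, if_pos (show 2*i + j = ν by omega)]
      simp only [AC]
      rw [if_pos hj2, show (ν - j) / 2 = i by omega]
      simp only [pc]
      ring
    · subst hk
      rcases (show j = 2 ∨ 3 ≤ j by omega) with hj | hj3
      · subst hj
        norm_num
        rw [rowAB_coeff (BC ν P) (ν-1) i 2, if_pos (show 2*i + 2 = ν - 1 by omega)]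
        rw [rowX_coeff (XC ν P) (ν-1) 0 (i+1), if_pos (show 0 + 2*(i+1) = ν - 1 by omega)]
        simp only [BC]
        norm_num
        rw [show (ν - 1) / 2 = i + 1 by omega, show (ν - 3) / 2 = i by omega]
        simp only [pc]
        push_cast
        ring
      · rw [if_neg (show ¬ j ≤ 1 by omega), if_neg (show ¬ j = 0 by omega),
          if_neg (show ¬ j - 1 ≤ 1 by omega)]
        norm_num
        rw [rowAB_coeff (BC ν P) (ν-1) i j, if_pos (show 2*i + j = ν - 1 by omega)]
        simp only [BC]
        rw [if_pos hj3, show (ν - 1 - j) / 2 = i by omega]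
        simp only [pc]
        ring
    · -- both ≥ 2 : the pair cases
      have hpair : (j = 2 ∨ j = 3) ∧ (k = 2 ∨ k = 3) := by
        simp only [NonNormal, m3_0, m3_1, m3_2] at hnn
        rcases hnn with h | h | h | h | h
        · omega
        · omega
        · omega
        · omega
        · exact h
      have hne1 : ((i:ℝ) + 2) - 1 ≠ 0 := by intro h; nlinarith
      have hne2 : ((i:ℝ) + 3) - 1 ≠ 0 := by intro h; nlinarith
      have hne3 : ((i:ℝ) + 3) - 2 ≠ 0 := by intro h; nlinarith
      have hne4 : ((i:ℝ) + 2) ≠ 0 := by positivity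
      have hne5 : ((i:ℝ) + 3) ≠ 0 := by positivity
      rcases hpair with ⟨hj | hj, hk' | hk'⟩ <;> subst hj <;> subst hk'
      · -- (2,2)
        norm_num
        rw [rowX_coeff (EC ν P) ν 0 (i+2), if_pos (show 0 + 2*(i+2) = ν by omega)]
        rw [rowX_coeff (XC ν P) (ν-1) 1 (i+1), if_pos (show 1 + 2*(i+1) = ν - 1 by omega)]
        simp only [XC]
        norm_num
        rw [show ν / 2 = i + 2 by omega]
        rw [if_pos (show 2 ≤ i + 2 by omega)]
        rw [show i + 2 - 2 = i by omega, c2]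
        simp only [pc]
        push_cast
        field_simp [hne1]
        ring
      · -- (2,3)
        norm_num
        rw [rowX_coeff (EC ν P) ν 1 (i+2), if_pos (show 1 + 2*(i+2) = ν by omega)]
        rw [rowX_coeff (XC ν P) (ν-1) 2 (i+1), if_pos (show 2 + 2*(i+1) = ν - 1 by omega)]
        simp only [XC]
        norm_num
        rw [show (ν - 1 - 2) / 2 = i + 1 by omega]
        simp only [EC]
        norm_num
        rw [show (ν - 1) / 2 = i + 2 by omega]
        rw [if_pos (show 2 ≤ i + 2 by omega)]
        rw [show i + 2 - 1 = i + 1 by omega, show i + 2 - 2 = i by omega, c2]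
        simp only [pc]
        push_cast
        field_simp [hne1, hne4]
        ring
      · -- (3,2)
        norm_num
        rw [rowX_coeff (XC ν P) (ν-1) 0 (i+2), if_pos (show 0 + 2*(i+2) = ν - 1 by omega)]
        simp only [XC]
        norm_num
        rw [show (ν - 1) / 2 = i + 2 by omega]
        rw [if_pos (show 2 ≤ i + 2 by omega)]
        rw [show i + 2 - 2 = i by omega, c2]
        simp only [pc]
        push_cast
        field_simp [hne1, hne4]
        ring
      · -- (3,3)
        norm_num
        rw [rowX_coeff (EC ν P) ν 0 (i+3), if_pos (show 0 + 2*(i+3) = ν by omega)]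
        rw [rowX_coeff (XC ν P) (ν-1) 1 (i+2), if_pos (show 1 + 2*(i+2) = ν - 1 by omega)]
        simp only [XC]
        norm_num
        rw [show ν / 2 = i + 3 by omega]
        rw [if_pos (show 2 ≤ i + 3 by omega)]
        simp only [EC]
        norm_num
        rw [show ν / 2 = i + 3 by omega]
        rw [if_pos (show 3 ≤ i + 3 by omega)]
        rw [show i + 3 - 2 = i + 1 by omega, show i + 3 - 3 = i by omega, c2, c3]
        simp only [pc]
        push_cast
        field_simp [hne2, hne3, hne5]
        ring

end CMaux

/-- For every `ν ≥ 3`, the space of weighted homogeneous polynomials of weight `ν`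
in `(a,b,x)` is the direct sum of the image of the Chern–Moser operator `T_ν`
and the span `N_ν` of the weight-`ν` monomials that are not non-normal:
every weight-`ν` homogeneous polynomial decomposes as `T(η,α,β,ξ) + N`,
and the intersection of the image with `N_ν` is trivial. -/
theorem stmt0 (ν : ℕ) (hν : 3 ≤ ν) :
    (∀ P : MvPolynomial (Fin 3) ℝ, P.IsWeightedHomogeneous wABX ν →
      ∃ (η α β ξ : MvPolynomial (Fin 2) ℝ) (N : MvPolynomial (Fin 3) ℝ),
        η.IsWeightedHomogeneous wXY ν ∧ α.IsWeightedHomogeneous wAB ν ∧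
        β.IsWeightedHomogeneous wAB (ν - 1) ∧ ξ.IsWeightedHomogeneous wXY (ν - 1) ∧
        N.IsWeightedHomogeneous wABX ν ∧ (∀ d ∈ N.support, ¬ NonNormal d) ∧
        P = cmT η α β ξ + N) ∧
    (∀ η α β ξ : MvPolynomial (Fin 2) ℝ,
      η.IsWeightedHomogeneous wXY ν → α.IsWeightedHomogeneous wAB ν →
      β.IsWeightedHomogeneous wAB (ν - 1) → ξ.IsWeightedHomogeneous wXY (ν - 1) →
      (cmT η α β ξ).IsWeightedHomogeneous wABX ν →
      (∀ d ∈ (cmT η α β ξ).support, ¬ NonNormal d) →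
      cmT η α β ξ = 0) := by
  constructor
  · intro P hP
    set T := cmT (CMaux.rowX (CMaux.EC ν P) ν) (CMaux.rowAB (CMaux.AC ν P) ν)
      (CMaux.rowAB (CMaux.BC ν P) (ν-1)) (CMaux.rowX (CMaux.XC ν P) (ν-1)) with hT
    have hThom : T.IsWeightedHomogeneous wABX ν :=
      CMaux.cmT_hom ν (by omega) _ _ _ _ (CMaux.rowX_hom _ _) (CMaux.rowAB_hom _ _)
        (CMaux.rowAB_hom _ _) (CMaux.rowX_hom _ _)
    refine ⟨_, _, _, _, P - T, CMaux.rowX_hom _ _, CMaux.rowAB_hom _ _, CMaux.rowAB_hom _ _,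
      CMaux.rowX_hom _ _, ?_, ?_, by ring⟩
    · intro d hd
      rw [coeff_sub] at hd
      by_cases h1 : coeff d P = 0
      · refine hThom (d := d) ?_
        intro h
        apply hd
        rw [h1, h, sub_self]
      · exact hP h1
    · intro d hd hnn
      rw [MvPolynomial.mem_support_iff] at hd
      apply hd
      rw [coeff_sub]
      by_cases hw : (Finsupp.weight wABX) d = ν
      · have heq : coeff d T = coeff d P := by
          rw [hT, CMaux.eq_m3 d]
          have hw' : 2 * d 0 + d 1 + d 2 = ν := by
            rw [CMaux.eq_m3 d, CMaux.weight_m3] at hw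
            omega
          exact CMaux.exist_key ν hν P (d 0) (d 1) (d 2) hw'
            (by rw [← CMaux.eq_m3 d]; exact hnn)
        rw [heq, sub_self]
      · have hp0 : coeff d P = 0 := by
          by_contra h
          exact hw (hP h)
        have ht0 : coeff d T = 0 := by
          by_contra h
          exact hw (hThom h)
        rw [hp0, ht0, sub_self]
  · intro η α β ξ _ _ _ _ _ hsupp
    apply CMaux.uniq
    intro i j k hnn
    by_contra h
    exact hsupp _ (MvPolynomial.mem_support_iff.mpr h) hnn
end

section
/- Let ℓ ≥ 2 and let P_{ℓ+1} be a weighted homogeneous polynomial of weight ℓ+1 in (a,b,x). Then there exist polynomials ξ(x,y) and β(a,b), weighted homogeneous of weight ℓ, and η(x,y) and α(a,b), weighted homogeneous of weight ℓ+1, such that the polynomial P*_{ℓ+1} := P_{ℓ+1} + η(x, a+bx) − α(a,b) − x·β(a,b) − b·ξ(x, a+bx) is in normal form, i.e. contains no non-normal monomials. Moreover, if ℓ > 4 then the quadruple (η,α,β,ξ) with this property is unique. (Consequently, if the weighted ℓ-jet of a regular hypersurface y = a + bx + Σ_{ν≥3} P_ν is in jet normal form, the mapping X = x+ξ(x,y),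 Y = y+η(x,y), A = a+α(a,b), B = b+β(a,b) takes its weighted (ℓ+1)-jet into jet normal form without changing the terms of weight ≤ ℓ.) -/
/- Weights: a ↦ 2, b ↦ 1, x ↦ 1 (variables of `MvPolynomial (Fin 3) ℝ`, indices 0,1,2);
   for polynomials in (x,y): x ↦ 1, y ↦ 2; for polynomials in (a,b): a ↦ 2, b ↦ 1. -/

open MvPolynomial

open Finset

noncomputable def e3 (i j k : ℕ) : Fin 3 →₀ ℕ :=
  Finsupp.single 0 i + Finsupp.single 1 j + Finsupp.single 2 k

noncomputable def e2 (m n : ℕ) : Fin 2 →₀ ℕ :=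
  Finsupp.single 0 m + Finsupp.single 1 n

@[simp] lemma e3_apply0 (i j k : ℕ) : e3 i j k 0 = i := by simp [e3]
@[simp] lemma e3_apply1 (i j k : ℕ) : e3 i j k 1 = j := by simp [e3]
@[simp] lemma e3_apply2 (i j k : ℕ) : e3 i j k 2 = k := by simp [e3]
@[simp] lemma e2_apply0 (m n : ℕ) : e2 m n 0 = m := by simp [e2]
@[simp] lemma e2_apply1 (m n : ℕ) : e2 m n 1 = n := by simp [e2]

lemma e3_surj (d : Fin 3 →₀ ℕ) : d = e3 (d 0) (d 1) (d 2) := by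
  ext a; fin_cases a <;> simp

lemma e2_surj (u : Fin 2 →₀ ℕ) : u = e2 (u 0) (u 1) := by
  ext a; fin_cases a <;> simp

lemma e3_inj {i j k i' j' k' : ℕ} (h : e3 i j k = e3 i' j' k') : i = i' ∧ j = j' ∧ k = k' := by
  refine ⟨?_, ?_, ?_⟩
  · have := (Finsupp.ext_iff.mp h) 0; simpa using this
  · have := (Finsupp.ext_iff.mp h) 1; simpa using this
  · have := (Finsupp.ext_iff.mp h) 2; simpa using this

@[simp] lemma e3_eq_iff {i j k i' j' k' : ℕ} :
    e3 i j k = e3 i' j' k' ↔ i = i' ∧ j = j' ∧ k = k' := by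
  constructor
  · exact e3_inj
  · rintro ⟨rfl, rfl, rfl⟩; rfl

@[simp] lemma e2_eq_iff {m n m' n' : ℕ} : e2 m n = e2 m' n' ↔ m = m' ∧ n = n' := by
  constructor
  · intro h
    constructor
    · have := (Finsupp.ext_iff.mp h) 0; simpa using this
    · have := (Finsupp.ext_iff.mp h) 1; simpa using this
  · rintro ⟨rfl, rfl⟩; rfl

lemma weight_e3 (i j k : ℕ) : Finsupp.weight wABX (e3 i j k) = 2*i + j + k := by
  simp [e3, map_add, Finsupp.weight_apply, Finsupp.sum_single_index, wABX]
  ring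

lemma weight_e2XY (m n : ℕ) : Finsupp.weight wXY (e2 m n) = m + 2*n := by
  simp [e2, map_add, Finsupp.weight_apply, Finsupp.sum_single_index, wXY]
  ring

lemma weight_e2AB (m n : ℕ) : Finsupp.weight wAB (e2 m n) = 2*m + n := by
  simp [e2, map_add, Finsupp.weight_apply, Finsupp.sum_single_index, wAB]
  ring

lemma monomial_e2 (m n : ℕ) (a : ℝ) :
    (monomial (e2 m n) a) = C a * X 0 ^ m * X 1 ^ n := by
  rw [X_pow_eq_monomial, X_pow_eq_monomial, C_apply, monomial_mul, monomial_mul]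
  simp [e2]

lemma monomial_e3 (i j k : ℕ) (a : ℝ) :
    (monomial (e3 i j k) a : MvPolynomial (Fin 3) ℝ) = C a * X 0 ^ i * X 1 ^ j * X 2 ^ k := by
  rw [X_pow_eq_monomial, X_pow_eq_monomial, X_pow_eq_monomial, C_apply,
    monomial_mul, monomial_mul, monomial_mul]
  simp [e3]

lemma coeff_aeval_ab (q : MvPolynomial (Fin 2) ℝ) (i j k : ℕ) :
    coeff (e3 i j k) (aeval ![(X 0 : MvPolynomial (Fin 3) ℝ), X 1] q)
      = if k = 0 then q.coeff (e2 i j) else 0 := by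
  induction q using MvPolynomial.induction_on' with
  | add p q hp hq =>
    simp only [map_add, coeff_add, hp, hq]
    split_ifs <;> simp
  | monomial u a =>
    have hu : u = e2 (u 0) (u 1) := by
      ext t; fin_cases t <;> simp [e2]
    rw [hu]
    set m := u 0; set n := u 1
    rw [monomial_e2]
    simp only [map_mul, map_pow, aeval_C, aeval_X, Matrix.cons_val_zero, Matrix.cons_val_one,
      Matrix.head_cons, MvPolynomial.algebraMap_eq]
    simp only [show (C a * (X 0 : MvPolynomial (Fin 3) ℝ) ^ m * X 1 ^ n) = monomial (e3 m n 0) a by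
      rw [monomial_e3]; simp]
    rw [coeff_monomial, ← monomial_e2, coeff_monomial]
    split_ifs with h1 h2 h3 <;> simp_all <;> omega

lemma coeff_aeval_xy (q : MvPolynomial (Fin 2) ℝ) (i j k : ℕ) :
    coeff (e3 i j k) (aeval ![(X 2 : MvPolynomial (Fin 3) ℝ), X 0 + X 1 * X 2] q)
      = if j ≤ k then ((i+j).choose j : ℝ) * q.coeff (e2 (k - j) (i + j)) else 0 := by
  induction q using MvPolynomial.induction_on' with
  | add p q hp hq =>
    simp only [map_add, coeff_add, hp, hq]
    split_ifs <;> ring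
  | monomial u a =>
    have hu : u = e2 (u 0) (u 1) := by
      ext t; fin_cases t <;> simp [e2]
    rw [hu]
    set m := u 0; set n := u 1
    rw [monomial_e2]
    simp only [map_mul, map_pow, aeval_C, aeval_X, Matrix.cons_val_zero, Matrix.cons_val_one,
      Matrix.head_cons, MvPolynomial.algebraMap_eq]
    have hexp : (C a * (X 2 : MvPolynomial (Fin 3) ℝ) ^ m * (X 0 + X 1 * X 2) ^ n)
        = ∑ t ∈ range (n+1), monomial (e3 t (n - t) (m + (n - t))) (a * (n.choose t : ℝ)) := by
      rw [add_pow, Finset.mul_sum]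
      refine Finset.sum_congr rfl fun t ht => ?_
      rw [monomial_e3, mul_pow, map_mul,
        show ((n.choose t : ℕ) : MvPolynomial (Fin 3) ℝ) = C ((n.choose t : ℕ) : ℝ) by
          push_cast; rfl]
      ring
    rw [hexp, coeff_sum]
    simp only [coeff_monomial, e3_eq_iff]
    rw [← monomial_e2]
    rw [Finset.sum_eq_single i]
    · rw [coeff_monomial]
      by_cases hin : i ≤ n
      · have h1 : (i = i ∧ n - i = j ∧ m + (n - i) = k) ↔ (n = i + j ∧ m + j = k) := by omega
        by_cases hc : n = i + j ∧ m + j = k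
        · rw [if_pos (h1.mpr hc)]
          have hjk : j ≤ k := by omega
          rw [if_pos hjk, if_pos (by rw [e2_eq_iff]; constructor <;> omega)]
          have : n.choose i = (i+j).choose j := by
            rw [← hc.1]
            have h2 := Nat.choose_symm (n := n) (k := i) hin
            rw [← h2]; congr 1; omega
          rw [this]; ring
        · rw [if_neg (by rw [h1]; exact hc)]
          by_cases hjk : j ≤ k
          · rw [if_pos hjk, if_neg (by rw [e2_eq_iff]; intro hx; exact hc ⟨by omega, by omega⟩)]
            ring
          · rw [if_neg hjk]
      · have hch : n.choose i = 0 := Nat.choose_eq_zero_of_lt (by omega)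
        by_cases hc : (i = i ∧ n - i = j ∧ m + (n - i) = k)
        · rw [if_pos hc, hch]
          by_cases hjk : j ≤ k
          · rw [if_pos hjk, if_neg (by rw [e2_eq_iff]; intro hx; omega)]
            simp
          · rw [if_neg hjk]; simp
        · rw [if_neg hc]
          by_cases hjk : j ≤ k
          · rw [if_pos hjk, if_neg (by rw [e2_eq_iff]; intro hx; omega)]
            ring
          · rw [if_neg hjk]
    · intro t ht hti
      rw [if_neg (by intro hx; exact hti hx.1)]
    · intro hnotin
      have hni : n < i := by simpa using hnotin
      rw [Nat.choose_eq_zero_of_lt hni]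
      split_ifs <;> simp
lemma e3_sub2 (i j k : ℕ) (hk : 1 ≤ k) :
    e3 i j k - Finsupp.single 2 1 = e3 i j (k - 1) := by
  ext a; fin_cases a <;> simp [e3, Finsupp.sub_apply] <;> omega

lemma e3_sub1 (i j k : ℕ) (hj : 1 ≤ j) :
    e3 i j k - Finsupp.single 1 1 = e3 i (j - 1) k := by
  ext a; fin_cases a <;> simp [e3, Finsupp.sub_apply] <;> omega

lemma coeffT (η α β ξ : MvPolynomial (Fin 2) ℝ) (i j k : ℕ) :
    coeff (e3 i j k) (cmT η α β ξ) =
      (if j ≤ k then ((i+j).choose j : ℝ) * η.coeff (e2 (k - j) (i + j)) else 0)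
      - (if k = 1 then β.coeff (e2 i j) else 0)
      - (if k = 0 then α.coeff (e2 i j) else 0)
      - (if 1 ≤ j ∧ j ≤ k + 1 then
          ((i + j - 1).choose (j - 1) : ℝ) * ξ.coeff (e2 (k + 1 - j) (i + j - 1)) else 0) := by
  rw [cmT]
  simp only [coeff_sub]
  rw [coeff_aeval_ab, coeff_aeval_xy]
  have hb : coeff (e3 i j k) (X 2 * aeval ![(X 0 : MvPolynomial (Fin 3) ℝ), X 1] β)
      = if k = 1 then β.coeff (e2 i j) else 0 := by
    rw [mul_comm, coeff_mul_X']
    by_cases hk : k = 0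
    · rw [if_neg (by simp [Finsupp.mem_support_iff, hk]), if_neg (by omega)]
    · rw [if_pos (by simp [Finsupp.mem_support_iff]; omega),
        show (e3 i j k - fun₀ | (2 : Fin 3) => 1) = e3 i j (k-1) from e3_sub2 i j k (by omega),
        coeff_aeval_ab]
      split_ifs <;> first | rfl | omega
  have hx : coeff (e3 i j k) (X 1 * aeval ![(X 2 : MvPolynomial (Fin 3) ℝ), X 0 + X 1 * X 2] ξ)
      = if 1 ≤ j ∧ j ≤ k + 1 then
          ((i + j - 1).choose (j - 1) : ℝ) * ξ.coeff (e2 (k + 1 - j) (i + j - 1)) else 0 := by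
    rw [mul_comm, coeff_mul_X']
    by_cases hj : j = 0
    · rw [if_neg (by simp [Finsupp.mem_support_iff, hj]), if_neg (by omega)]
    · rw [if_pos (by simp [Finsupp.mem_support_iff]; omega),
        show (e3 i j k - fun₀ | (1 : Fin 3) => 1) = e3 i (j-1) k from e3_sub1 i j k (by omega),
        coeff_aeval_xy]
      have h1 : i + (j-1) = i + j - 1 := by omega
      have h2 : k - (j-1) = k + 1 - j := by omega
      rw [h1, h2]
      split_ifs <;> first | rfl | omega
  rw [hb, hx]
  ring

/-! Helper binomial identities -/

lemma two_mul_choose_two (m : ℕ) : 2 * (m+2).choose 2 = (m+2) * (m+1) := by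
  have h := Nat.add_one_mul_choose_eq (m+1) 1
  simp only [Nat.succ_eq_add_one, Nat.choose_one_right] at h
  have e : m+1+1 = m+2 := by omega
  rw [e] at h
  norm_num at h
  omega

lemma cast_choose_two {M : ℕ} (h : 2 ≤ M) : ((M.choose 2 : ℕ) : ℝ) = (M:ℝ)*((M:ℝ)-1)/2 := by
  obtain ⟨m, rfl⟩ : ∃ m, M = m+2 := ⟨M-2, by omega⟩
  have h2 := two_mul_choose_two m
  have h3 : ((2 * (m+2).choose 2 : ℕ) : ℝ) = (((m+2) * (m+1) : ℕ) : ℝ) := by rw [h2]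
  push_cast at h3 ⊢
  linarith

lemma three_mul_choose_three (m : ℕ) : 3 * (m+3).choose 3 = (m+3) * (m+2).choose 2 := by
  have h := Nat.add_one_mul_choose_eq (m+2) 2
  have e : m+2+1 = m+3 := by omega
  rw [e] at h
  norm_num at h
  omega

lemma cast_choose_three {M : ℕ} (h : 3 ≤ M) :
    ((M.choose 3 : ℕ) : ℝ) = (M:ℝ)*((M:ℝ)-1)*((M:ℝ)-2)/6 := by
  obtain ⟨m, rfl⟩ : ∃ m, M = m+3 := ⟨M-3, by omega⟩
  have h2 := three_mul_choose_three m
  have h3 : ((3 * (m+3).choose 3 : ℕ) : ℝ) = (((m+3) * (m+2).choose 2 : ℕ) : ℝ) := by rw [h2]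
  rw [Nat.cast_mul, Nat.cast_mul, cast_choose_two (by omega : 2 ≤ m+2)] at h3
  push_cast at h3 ⊢
  linarith

/-! The solution coefficients -/

noncomputable def Dev (M : ℕ) : ℝ :=
  ((M:ℝ)-1) * (M.choose 3 : ℕ) - ((M.choose 2 : ℕ) : ℝ) * (((M-1).choose 2 : ℕ) : ℝ)

lemma Dev_eq {M : ℕ} (h : 3 ≤ M) : Dev M = -((M:ℝ)*((M:ℝ)-1)^2*((M:ℝ)-2))/12 := by
  unfold Dev
  rw [cast_choose_three h, cast_choose_two (by omega : 2 ≤ M),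
    cast_choose_two (by omega : 2 ≤ M - 1)]
  have hc : ((M - 1 : ℕ) : ℝ) = (M:ℝ) - 1 := by
    have : (1:ℕ) ≤ M := by omega
    push_cast [this]; ring
  rw [hc]
  ring

lemma Dev_ne {M : ℕ} (h : 3 ≤ M) : Dev M ≠ 0 := by
  rw [Dev_eq h]
  have hM : (3:ℝ) ≤ (M:ℝ) := by exact_mod_cast h
  have h1 : (0:ℝ) < (M:ℝ)*((M:ℝ)-1)^2*((M:ℝ)-2) := by
    have a1 : (0:ℝ) < (M:ℝ) := by linarith
    have a2 : (0:ℝ) < ((M:ℝ)-1)^2 := by nlinarith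
    have a3 : (0:ℝ) < (M:ℝ)-2 := by linarith
    exact mul_pos (mul_pos a1 a2) a3
  intro h
  rw [div_eq_zero_iff] at h
  rcases h with h | h
  · linarith
  · norm_num at h

noncomputable def dOdd (M : ℕ) : ℝ := ((M.choose 2 : ℕ) : ℝ) - (M:ℝ) * ((M:ℝ)-1)

lemma dOdd_eq {M : ℕ} (h : 2 ≤ M) : dOdd M = -((M:ℝ)*((M:ℝ)-1))/2 := by
  unfold dOdd; rw [cast_choose_two h]; ring

lemma dOdd_ne {M : ℕ} (h : 2 ≤ M) : dOdd M ≠ 0 := by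
  rw [dOdd_eq h]
  have hM : (2:ℝ) ≤ (M:ℝ) := by exact_mod_cast h
  have h1 : (0:ℝ) < (M:ℝ)*((M:ℝ)-1) := by nlinarith
  intro h
  rw [div_eq_zero_iff] at h
  rcases h with h | h
  · linarith
  · norm_num at h

noncomputable def etaTopE (M : ℕ) (p : ℕ → ℕ → ℕ → ℝ) : ℝ :=
  if 3 ≤ M then
    ((((M-1).choose 2 : ℕ) : ℝ) * p (M-2) 2 2 - ((M:ℝ)-1) * p (M-3) 3 3) / Dev M
  else 0

noncomputable def xiTopE (M : ℕ) (p : ℕ → ℕ → ℕ → ℝ) : ℝ :=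
  if 3 ≤ M then
    (((M.choose 3 : ℕ) : ℝ) * p (M-2) 2 2 - ((M.choose 2 : ℕ) : ℝ) * p (M-3) 3 3) / Dev M
  else if M = 2 then p 0 2 2 else 0

noncomputable def etaTopO (M : ℕ) (p : ℕ → ℕ → ℕ → ℝ) : ℝ :=
  if 2 ≤ M then (((M:ℝ)-1) * p (M-1) 1 2 - p (M-2) 2 3) / dOdd M else 0

noncomputable def xiTopO (M : ℕ) (p : ℕ → ℕ → ℕ → ℝ) : ℝ :=
  if 2 ≤ M then p (M-2) 3 2 / ((M.choose 2 : ℕ) : ℝ) else 0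

noncomputable def etaC (ℓ : ℕ) (p : ℕ → ℕ → ℕ → ℝ) (i : ℕ) : ℝ :=
  if i = (ℓ+1)/2 then
    (if (ℓ+1) % 2 = 0 then etaTopE ((ℓ+1)/2) p else etaTopO ((ℓ+1)/2) p)
  else -p i 0 (ℓ+1-2*i)

noncomputable def xiC (ℓ : ℕ) (p : ℕ → ℕ → ℕ → ℝ) (i : ℕ) : ℝ :=
  if i = ℓ/2 then
    (if (ℓ+1) % 2 = 0 then xiTopE ((ℓ+1)/2) p else xiTopO ((ℓ+1)/2) p)
  else p i 1 (ℓ-2*i) + ((i:ℝ)+1) * etaC ℓ p (i+1)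

noncomputable def alC (ℓ : ℕ) (p : ℕ → ℕ → ℕ → ℝ) (i : ℕ) : ℝ :=
  if i = (ℓ+1)/2 then
    (if (ℓ+1) % 2 = 0 then p i 0 0 + etaC ℓ p i else p i 1 0 - xiC ℓ p i)
  else p i (ℓ+1-2*i) 0

noncomputable def beC (ℓ : ℕ) (p : ℕ → ℕ → ℕ → ℝ) (i : ℕ) : ℝ :=
  if (ℓ+1) % 2 = 0 then
    (if i+1 = (ℓ+1)/2 then
      p i 1 1 + (((ℓ+1)/2 : ℕ) : ℝ) * etaC ℓ p ((ℓ+1)/2) - xiC ℓ p i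
     else p i (ℓ-2*i) 1)
  else
    (if i = (ℓ+1)/2 then p i 0 1 + etaC ℓ p i
     else if i+1 = (ℓ+1)/2 then p i 2 1 - (((ℓ+1)/2 : ℕ) : ℝ) * xiC ℓ p ((ℓ+1)/2)
     else p i (ℓ-2*i) 1)

/-! The key identity -/

lemma keyEQ (ℓ : ℕ) (hl : 2 ≤ ℓ) (p : ℕ → ℕ → ℕ → ℝ) (i j k : ℕ)
    (hw : 2*i + j + k = ℓ + 1)
    (hnn : j = 0 ∨ k = 0 ∨ j = 1 ∨ k = 1 ∨ ((j = 2 ∨ j = 3) ∧ (k = 2 ∨ k = 3))) :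
    p i j k + (if j ≤ k then (((i+j).choose j : ℕ) : ℝ) * etaC ℓ p (i+j) else 0)
      - (if k = 1 then beC ℓ p i else 0)
      - (if k = 0 then alC ℓ p i else 0)
      - (if 1 ≤ j ∧ j ≤ k + 1 then
          (((i+j-1).choose (j-1) : ℕ) : ℝ) * xiC ℓ p (i+j-1) else 0) = 0 := by
  by_cases hj0 : j = 0
  · subst hj0
    simp only [Nat.add_zero, Nat.choose_zero_right, Nat.cast_one, one_mul,
      if_pos (Nat.zero_le k), if_neg (by omega : ¬ (1 ≤ 0 ∧ 0 ≤ k + 1))]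
    by_cases hk0 : k = 0
    · subst hk0
      have hpar : (ℓ+1) % 2 = 0 := by omega
      have hi : i = (ℓ+1)/2 := by omega
      rw [if_neg (by omega : ¬ (0:ℕ) = 1), if_pos rfl, alC, if_pos hi, if_pos hpar, hi]
      ring
    · by_cases hk1 : k = 1
      · subst hk1
        have hpar : ¬ (ℓ+1) % 2 = 0 := by omega
        have hi : i = (ℓ+1)/2 := by omega
        rw [if_pos rfl, if_neg (by omega : ¬ (1:ℕ) = 0), beC, if_neg hpar, if_pos hi, hi]
        ring
      · -- k ≥ 2
        rw [if_neg hk1, if_neg hk0, etaC, if_neg (by omega : ¬ i = (ℓ+1)/2),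
          show ℓ+1-2*i = k from by omega]
        ring
  · by_cases hj1 : j = 1
    · subst hj1
      simp only [Nat.add_sub_cancel, Nat.sub_self, Nat.choose_zero_right, Nat.cast_one, one_mul,
        Nat.choose_one_right, if_pos (by omega : 1 ≤ 1 ∧ 1 ≤ k + 1)]
      by_cases hk0 : k = 0
      · subst hk0
        have hpar : ¬ (ℓ+1) % 2 = 0 := by omega
        have hi : i = (ℓ+1)/2 := by omega
        rw [if_neg (by omega : ¬ (1:ℕ) ≤ 0), if_neg (by omega : ¬ (0:ℕ) = 1), if_pos rfl,
          alC, if_pos hi, if_neg hpar, hi]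
        ring
      · by_cases hk1 : k = 1
        · subst hk1
          have hpar : (ℓ+1) % 2 = 0 := by omega
          have hi1 : i + 1 = (ℓ+1)/2 := by omega
          have hi : i = ℓ/2 := by omega
          rw [if_pos (le_refl 1), if_pos rfl, if_neg (by omega : ¬ (1:ℕ) = 0),
            beC, if_pos hpar, if_pos hi1, ← hi1]
          push_cast
          ring
        · -- k ≥ 2
          rw [if_pos (by omega : 1 ≤ k), if_neg hk1, if_neg hk0,
            xiC, if_neg (by omega : ¬ i = ℓ/2), show ℓ-2*i = k from by omega]
          push_cast
          ring
    · -- j ≥ 2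
      have hj2 : 2 ≤ j := by omega
      by_cases hk0 : k = 0
      · subst hk0
        rw [if_neg (by omega : ¬ j ≤ 0), if_neg (by omega : ¬ (0:ℕ) = 1), if_pos rfl,
          if_neg (by omega : ¬ (1 ≤ j ∧ j ≤ 0 + 1)),
          alC, if_neg (by omega : ¬ i = (ℓ+1)/2), show ℓ+1-2*i = j from by omega]
        ring
      · by_cases hk1 : k = 1
        · subst hk1
          by_cases hj2' : j = 2
          · subst hj2'
            have hpar : ¬ (ℓ+1) % 2 = 0 := by omega
            have hi1 : i + 1 = (ℓ+1)/2 := by omega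
            have hi1' : i + 1 = ℓ/2 := by omega
            rw [if_neg (by omega : ¬ (2:ℕ) ≤ 1), if_pos rfl, if_neg (by omega : ¬ (1:ℕ) = 0),
              if_pos (by omega : 1 ≤ 2 ∧ 2 ≤ 1 + 1),
              show i+2-1 = i+1 from by omega, show (2:ℕ)-1 = 1 from rfl,
              Nat.choose_one_right,
              beC, if_neg hpar, if_neg (by omega : ¬ i = (ℓ+1)/2), if_pos hi1, ← hi1]
            push_cast
            ring
          · -- j ≥ 3, k = 1
            rw [if_neg (by omega : ¬ j ≤ 1), if_pos rfl, if_neg (by omega : ¬ (1:ℕ) = 0),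
              if_neg (by omega : ¬ (1 ≤ j ∧ j ≤ 1 + 1))]
            by_cases hpar : (ℓ+1) % 2 = 0
            · rw [beC, if_pos hpar, if_neg (by omega : ¬ i+1 = (ℓ+1)/2),
                show ℓ-2*i = j from by omega]
              ring
            · rw [beC, if_neg hpar, if_neg (by omega : ¬ i = (ℓ+1)/2),
                if_neg (by omega : ¬ i+1 = (ℓ+1)/2), show ℓ-2*i = j from by omega]
              ring
        · -- j,k ∈ {2,3}
          have hjk : (j = 2 ∨ j = 3) ∧ (k = 2 ∨ k = 3) := by tauto
          obtain ⟨hj', hk'⟩ := hjk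
          rcases hj' with hj' | hj' <;> rcases hk' with hk' | hk' <;> subst hj' <;> subst hk'
          · -- (2,2) even
            have hpar : (ℓ+1) % 2 = 0 := by omega
            have hi2 : i + 2 = (ℓ+1)/2 := by omega
            have hi1 : i + 1 = ℓ/2 := by omega
            rw [if_pos (le_refl 2), if_neg (by omega : ¬ (2:ℕ) = 1),
              if_neg (by omega : ¬ (2:ℕ) = 0), if_pos (by omega : 1 ≤ 2 ∧ 2 ≤ 2 + 1),
              show i+2-1 = i+1 from by omega, show (2:ℕ)-1 = 1 from rfl, Nat.choose_one_right,
              etaC, if_pos hi2, if_pos hpar, xiC, if_pos hi1, if_pos hpar, ← hi2]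
            by_cases hM : i = 0
            · subst hM
              rw [etaTopE, if_neg (by omega), xiTopE, if_neg (by omega), if_pos (by omega)]
              norm_num
            · rw [etaTopE, if_pos (by omega), xiTopE, if_pos (by omega),
                show i+2-2 = i from by omega, show i+2-3 = i-1 from by omega,
                show i+2-1 = i+1 from by omega]
              obtain ⟨n, rfl⟩ : ∃ n, i = n+1 := ⟨i-1, by omega⟩
              simp only [show n+1+2 = n+3 from by omega, show n+1-1 = n from by omega,
                show n+1+1 = n+2 from by omega]
              have hne := Dev_ne (by omega : 3 ≤ n+3)
              have hD : Dev (n+3) = ((n:ℝ)+2) * (((n+3).choose 3 : ℕ) : ℝ)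
                  - (((n+3).choose 2 : ℕ) : ℝ) * (((n+2).choose 2 : ℕ) : ℝ) := by
                rw [Dev, show n+3-1 = n+2 from by omega]; push_cast; ring
              field_simp
              linear_combination (norm := (push_cast; ring)) (p (n+1) 2 2) * hD
          · -- (2,3) odd
            have hpar : ¬ (ℓ+1) % 2 = 0 := by omega
            have hi2 : i + 2 = (ℓ+1)/2 := by omega
            have hi1 : ¬ i + 1 = ℓ/2 := by omega
            rw [if_pos (by omega : 2 ≤ 3), if_neg (by omega : ¬ (3:ℕ) = 1),
              if_neg (by omega : ¬ (3:ℕ) = 0), if_pos (by omega : 1 ≤ 2 ∧ 2 ≤ 3 + 1),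
              show i+2-1 = i+1 from by omega, show (2:ℕ)-1 = 1 from rfl, Nat.choose_one_right,
              etaC, if_pos hi2, if_neg hpar, xiC, if_neg hi1,
              show ℓ-2*(i+1) = 2 from by omega, etaC, if_pos hi2, if_neg hpar, ← hi2]
            rw [etaTopO, if_pos (by omega : 2 ≤ i+2),
              show i+2-1 = i+1 from by omega, show i+2-2 = i from by omega]
            have hne := dOdd_ne (by omega : 2 ≤ i+2)
            have hD : dOdd (i+2) = (((i+2).choose 2 : ℕ) : ℝ) - ((i:ℝ)+2)*((i:ℝ)+1) := by
              rw [dOdd]; push_cast; ring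
            field_simp
            rw [hD]
            push_cast
            ring
          · -- (3,2) odd
            have hpar : ¬ (ℓ+1) % 2 = 0 := by omega
            have hi2 : i + 2 = ℓ/2 := by omega
            rw [if_neg (by omega : ¬ (3:ℕ) ≤ 2), if_neg (by omega : ¬ (2:ℕ) = 1),
              if_neg (by omega : ¬ (2:ℕ) = 0), if_pos (by omega : 1 ≤ 3 ∧ 3 ≤ 2 + 1),
              show i+3-1 = i+2 from by omega, show (3:ℕ)-1 = 2 from rfl,
              xiC, if_pos hi2, if_neg hpar]
            rw [xiTopO, if_pos (by omega : 2 ≤ (ℓ+1)/2),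
              show (ℓ+1)/2-2 = i from by omega, show (ℓ+1)/2 = i+2 from by omega]
            have hch : (((i+2).choose 2 : ℕ) : ℝ) ≠ 0 := by
              have := Nat.choose_pos (by omega : 2 ≤ i+2)
              positivity
            field_simp
            ring
          · -- (3,3) even
            have hpar : (ℓ+1) % 2 = 0 := by omega
            have hi3 : i + 3 = (ℓ+1)/2 := by omega
            have hi2 : i + 2 = ℓ/2 := by omega
            rw [if_pos (le_refl 3), if_neg (by omega : ¬ (3:ℕ) = 1),
              if_neg (by omega : ¬ (3:ℕ) = 0), if_pos (by omega : 1 ≤ 3 ∧ 3 ≤ 3 + 1),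
              show i+3-1 = i+2 from by omega, show (3:ℕ)-1 = 2 from rfl,
              etaC, if_pos hi3, if_pos hpar, xiC, if_pos hi2, if_pos hpar, ← hi3]
            rw [etaTopE, if_pos (by omega : 3 ≤ i+3), xiTopE, if_pos (by omega : 3 ≤ i+3),
              show i+3-2 = i+1 from by omega, show i+3-3 = i from by omega,
              show i+3-1 = i+2 from by omega]
            have hne := Dev_ne (by omega : 3 ≤ i+3)
            have hD : Dev (i+3) = ((i:ℝ)+2) * (((i+3).choose 3 : ℕ) : ℝ)
                - (((i+3).choose 2 : ℕ) : ℝ) * (((i+2).choose 2 : ℕ) : ℝ) := by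
              rw [Dev, show i+3-1 = i+2 from by omega]; push_cast; ring
            field_simp
            linear_combination (norm := (push_cast; ring)) (p i 3 3) * hD
noncomputable def etaP (ℓ : ℕ) (p : ℕ → ℕ → ℕ → ℝ) : MvPolynomial (Fin 2) ℝ :=
  ∑ n ∈ range ((ℓ+1)/2 + 1), monomial (e2 (ℓ+1-2*n) n) (etaC ℓ p n)
noncomputable def xiP (ℓ : ℕ) (p : ℕ → ℕ → ℕ → ℝ) : MvPolynomial (Fin 2) ℝ :=
  ∑ n ∈ range (ℓ/2 + 1), monomial (e2 (ℓ-2*n) n) (xiC ℓ p n)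
noncomputable def alP (ℓ : ℕ) (p : ℕ → ℕ → ℕ → ℝ) : MvPolynomial (Fin 2) ℝ :=
  ∑ n ∈ range ((ℓ+1)/2 + 1), monomial (e2 n (ℓ+1-2*n)) (alC ℓ p n)
noncomputable def beP (ℓ : ℕ) (p : ℕ → ℕ → ℕ → ℝ) : MvPolynomial (Fin 2) ℝ :=
  ∑ n ∈ range (ℓ/2 + 1), monomial (e2 n (ℓ-2*n)) (beC ℓ p n)

lemma etaP_hom (ℓ : ℕ) (p : ℕ → ℕ → ℕ → ℝ) :
    (etaP ℓ p).IsWeightedHomogeneous wXY (ℓ+1) := by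
  rw [← mem_weightedHomogeneousSubmodule]
  apply Submodule.sum_mem
  intro n hn
  rw [mem_weightedHomogeneousSubmodule]
  apply isWeightedHomogeneous_monomial
  rw [weight_e2XY]
  simp at hn
  omega

lemma xiP_hom (ℓ : ℕ) (p : ℕ → ℕ → ℕ → ℝ) :
    (xiP ℓ p).IsWeightedHomogeneous wXY ℓ := by
  rw [← mem_weightedHomogeneousSubmodule]
  apply Submodule.sum_mem
  intro n hn
  rw [mem_weightedHomogeneousSubmodule]
  apply isWeightedHomogeneous_monomial
  rw [weight_e2XY]
  simp at hn
  omega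

lemma alP_hom (ℓ : ℕ) (p : ℕ → ℕ → ℕ → ℝ) :
    (alP ℓ p).IsWeightedHomogeneous wAB (ℓ+1) := by
  rw [← mem_weightedHomogeneousSubmodule]
  apply Submodule.sum_mem
  intro n hn
  rw [mem_weightedHomogeneousSubmodule]
  apply isWeightedHomogeneous_monomial
  rw [weight_e2AB]
  simp at hn
  omega

lemma beP_hom (ℓ : ℕ) (p : ℕ → ℕ → ℕ → ℝ) :
    (beP ℓ p).IsWeightedHomogeneous wAB ℓ := by
  rw [← mem_weightedHomogeneousSubmodule]
  apply Submodule.sum_mem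
  intro n hn
  rw [mem_weightedHomogeneousSubmodule]
  apply isWeightedHomogeneous_monomial
  rw [weight_e2AB]
  simp at hn
  omega

lemma coeff_etaP (ℓ : ℕ) (p : ℕ → ℕ → ℕ → ℝ) (m n : ℕ) :
    (etaP ℓ p).coeff (e2 m n)
      = if n ≤ (ℓ+1)/2 ∧ m = ℓ+1-2*n then etaC ℓ p n else 0 := by
  rw [etaP, coeff_sum]
  simp only [coeff_monomial, e2_eq_iff]
  by_cases hn : n ≤ (ℓ+1)/2
  · rw [Finset.sum_eq_single n]
    · split_ifs with h1 h2 h3 <;> simp_all <;> omega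
    · intro t ht htn; rw [if_neg (by tauto)]
    · intro hmem; exact absurd (by simp; omega : n ∈ range ((ℓ+1)/2 + 1)) hmem
  · rw [if_neg (by tauto), Finset.sum_eq_zero]
    intro t ht
    rw [if_neg (by simp at ht; omega)]

lemma coeff_xiP (ℓ : ℕ) (p : ℕ → ℕ → ℕ → ℝ) (m n : ℕ) :
    (xiP ℓ p).coeff (e2 m n)
      = if n ≤ ℓ/2 ∧ m = ℓ-2*n then xiC ℓ p n else 0 := by
  rw [xiP, coeff_sum]
  simp only [coeff_monomial, e2_eq_iff]
  by_cases hn : n ≤ ℓ/2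
  · rw [Finset.sum_eq_single n]
    · split_ifs with h1 h2 h3 <;> simp_all <;> omega
    · intro t ht htn; rw [if_neg (by tauto)]
    · intro hmem; exact absurd (by simp; omega : n ∈ range (ℓ/2 + 1)) hmem
  · rw [if_neg (by tauto), Finset.sum_eq_zero]
    intro t ht
    rw [if_neg (by simp at ht; omega)]

lemma coeff_alP (ℓ : ℕ) (p : ℕ → ℕ → ℕ → ℝ) (m n : ℕ) :
    (alP ℓ p).coeff (e2 m n)
      = if m ≤ (ℓ+1)/2 ∧ n = ℓ+1-2*m then alC ℓ p m else 0 := by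
  rw [alP, coeff_sum]
  simp only [coeff_monomial, e2_eq_iff]
  by_cases hm : m ≤ (ℓ+1)/2
  · rw [Finset.sum_eq_single m]
    · split_ifs with h1 h2 h3 <;> simp_all <;> omega
    · intro t ht htn; rw [if_neg (by tauto)]
    · intro hmem; exact absurd (by simp; omega : m ∈ range ((ℓ+1)/2 + 1)) hmem
  · rw [if_neg (by tauto), Finset.sum_eq_zero]
    intro t ht
    rw [if_neg (by simp at ht; omega)]

lemma coeff_beP (ℓ : ℕ) (p : ℕ → ℕ → ℕ → ℝ) (m n : ℕ) :
    (beP ℓ p).coeff (e2 m n)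
      = if m ≤ ℓ/2 ∧ n = ℓ-2*m then beC ℓ p m else 0 := by
  rw [beP, coeff_sum]
  simp only [coeff_monomial, e2_eq_iff]
  by_cases hm : m ≤ ℓ/2
  · rw [Finset.sum_eq_single m]
    · split_ifs with h1 h2 h3 <;> simp_all <;> omega
    · intro t ht htn; rw [if_neg (by tauto)]
    · intro hmem; exact absurd (by simp; omega : m ∈ range (ℓ/2 + 1)) hmem
  · rw [if_neg (by tauto), Finset.sum_eq_zero]
    intro t ht
    rw [if_neg (by simp at ht; omega)]

lemma coeff_sol (ℓ : ℕ) (p : ℕ → ℕ → ℕ → ℝ)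
    (η α β ξ : MvPolynomial (Fin 2) ℝ)
    (hη : ∀ m n, η.coeff (e2 m n) = if n ≤ (ℓ+1)/2 ∧ m = ℓ+1-2*n then etaC ℓ p n else 0)
    (hα : ∀ m n, α.coeff (e2 m n) = if m ≤ (ℓ+1)/2 ∧ n = ℓ+1-2*m then alC ℓ p m else 0)
    (hβ : ∀ m n, β.coeff (e2 m n) = if m ≤ ℓ/2 ∧ n = ℓ-2*m then beC ℓ p m else 0)
    (hξ : ∀ m n, ξ.coeff (e2 m n) = if n ≤ ℓ/2 ∧ m = ℓ-2*n then xiC ℓ p n else 0)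
    (i j k : ℕ) (hw : 2*i+j+k = ℓ+1) :
    coeff (e3 i j k) (cmT η α β ξ) =
      (if j ≤ k then (((i+j).choose j : ℕ) : ℝ) * etaC ℓ p (i+j) else 0)
      - (if k = 1 then beC ℓ p i else 0)
      - (if k = 0 then alC ℓ p i else 0)
      - (if 1 ≤ j ∧ j ≤ k + 1 then
          (((i+j-1).choose (j-1) : ℕ) : ℝ) * xiC ℓ p (i+j-1) else 0) := by
  rw [coeffT, hη, hα, hβ, hξ]
  have h1 : (if j ≤ k then (((i+j).choose j : ℕ) : ℝ) *
        (if i+j ≤ (ℓ+1)/2 ∧ k-j = ℓ+1-2*(i+j) then etaC ℓ p (i+j) else 0) else 0)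
      = (if j ≤ k then (((i+j).choose j : ℕ) : ℝ) * etaC ℓ p (i+j) else 0) := by
    by_cases h : j ≤ k
    · rw [if_pos h, if_pos h, if_pos (by omega)]
    · rw [if_neg h, if_neg h]
  have h2 : (if k = 1 then (if i ≤ ℓ/2 ∧ j = ℓ-2*i then beC ℓ p i else 0) else 0)
      = (if k = 1 then beC ℓ p i else 0) := by
    by_cases h : k = 1
    · rw [if_pos h, if_pos h, if_pos (by omega)]
    · rw [if_neg h, if_neg h]
  have h3 : (if k = 0 then (if i ≤ (ℓ+1)/2 ∧ j = ℓ+1-2*i then alC ℓ p i else 0) else 0)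
      = (if k = 0 then alC ℓ p i else 0) := by
    by_cases h : k = 0
    · rw [if_pos h, if_pos h, if_pos (by omega)]
    · rw [if_neg h, if_neg h]
  have h4 : (if 1 ≤ j ∧ j ≤ k + 1 then (((i+j-1).choose (j-1) : ℕ) : ℝ) *
        (if i+j-1 ≤ ℓ/2 ∧ k+1-j = ℓ-2*(i+j-1) then xiC ℓ p (i+j-1) else 0) else 0)
      = (if 1 ≤ j ∧ j ≤ k + 1 then
          (((i+j-1).choose (j-1) : ℕ) : ℝ) * xiC ℓ p (i+j-1) else 0) := by
    by_cases h : 1 ≤ j ∧ j ≤ k + 1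
    · rw [if_pos h, if_pos h, if_pos (by omega)]
    · rw [if_neg h, if_neg h]
  rw [h1, h2, h3, h4]

lemma coeffT_off (ℓ : ℕ) {η α β ξ : MvPolynomial (Fin 2) ℝ}
    (hη : η.IsWeightedHomogeneous wXY (ℓ+1)) (hα : α.IsWeightedHomogeneous wAB (ℓ+1))
    (hβ : β.IsWeightedHomogeneous wAB ℓ) (hξ : ξ.IsWeightedHomogeneous wXY ℓ)
    (i j k : ℕ) (hw : 2*i+j+k ≠ ℓ+1) :
    coeff (e3 i j k) (cmT η α β ξ) = 0 := by
  rw [coeffT]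
  have t1 : (if j ≤ k then (((i+j).choose j : ℕ) : ℝ) * η.coeff (e2 (k-j) (i+j)) else 0) = 0 := by
    split_ifs with h
    · rcases eq_or_ne (η.coeff (e2 (k-j) (i+j))) 0 with h0 | h0
      · rw [h0]; ring
      · have := hη h0; rw [weight_e2XY] at this; omega
    · rfl
  have t2 : (if k = 1 then β.coeff (e2 i j) else 0) = 0 := by
    split_ifs with h
    · rcases eq_or_ne (β.coeff (e2 i j)) 0 with h0 | h0
      · exact h0
      · have := hβ h0; rw [weight_e2AB] at this; omega
    · rfl
  have t3 : (if k = 0 then α.coeff (e2 i j) else 0) = 0 := by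
    split_ifs with h
    · rcases eq_or_ne (α.coeff (e2 i j)) 0 with h0 | h0
      · exact h0
      · have := hα h0; rw [weight_e2AB] at this; omega
    · rfl
  have t4 : (if 1 ≤ j ∧ j ≤ k + 1 then
      (((i+j-1).choose (j-1) : ℕ) : ℝ) * ξ.coeff (e2 (k+1-j) (i+j-1)) else 0) = 0 := by
    split_ifs with h
    · rcases eq_or_ne (ξ.coeff (e2 (k+1-j) (i+j-1))) 0 with h0 | h0
      · rw [h0]; ring
      · have := hξ h0; rw [weight_e2XY] at this; omega
    · rfl
  rw [t1, t2, t3, t4]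
  ring

lemma existence (ℓ : ℕ) (hℓ : 2 ≤ ℓ) (P : MvPolynomial (Fin 3) ℝ)
    (hP : P.IsWeightedHomogeneous wABX (ℓ + 1)) :
    ∃ η α β ξ : MvPolynomial (Fin 2) ℝ,
      η.IsWeightedHomogeneous wXY (ℓ + 1) ∧ α.IsWeightedHomogeneous wAB (ℓ + 1) ∧
      β.IsWeightedHomogeneous wAB ℓ ∧ ξ.IsWeightedHomogeneous wXY ℓ ∧
      ∀ d ∈ (P + cmT η α β ξ).support, ¬ NonNormal d := by
  set p : ℕ → ℕ → ℕ → ℝ := fun a b c => P.coeff (e3 a b c) with hp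
  refine ⟨etaP ℓ p, alP ℓ p, beP ℓ p, xiP ℓ p, etaP_hom ℓ p, alP_hom ℓ p, beP_hom ℓ p,
    xiP_hom ℓ p, ?_⟩
  intro d hd hNN
  rw [mem_support_iff] at hd
  apply hd
  rw [show d = e3 (d 0) (d 1) (d 2) from e3_surj d]
  set i := d 0 with hi; set j := d 1 with hj; set k := d 2 with hk
  have hnn : j = 0 ∨ k = 0 ∨ j = 1 ∨ k = 1 ∨ ((j = 2 ∨ j = 3) ∧ (k = 2 ∨ k = 3)) := hNN
  by_cases hw : 2*i + j + k = ℓ + 1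
  · rw [coeff_add, coeff_sol ℓ p _ _ _ _ (coeff_etaP ℓ p) (coeff_alP ℓ p) (coeff_beP ℓ p)
      (coeff_xiP ℓ p) i j k hw]
    have := keyEQ ℓ hℓ p i j k hw hnn
    rw [hp]
    linarith [this]
  · rw [coeff_add, coeffT_off ℓ (etaP_hom ℓ p) (alP_hom ℓ p) (beP_hom ℓ p) (xiP_hom ℓ p) i j k hw,
      hP.coeff_eq_zero (e3 i j k) (by rw [weight_e3]; omega)]
    ring
-- appended to full.lean after testing
lemma vanish (ℓ : ℕ) (hl5 : 4 < ℓ) {η α β ξ : MvPolynomial (Fin 2) ℝ}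
    (hη : η.IsWeightedHomogeneous wXY (ℓ+1)) (hα : α.IsWeightedHomogeneous wAB (ℓ+1))
    (hβ : β.IsWeightedHomogeneous wAB ℓ) (hξ : ξ.IsWeightedHomogeneous wXY ℓ)
    (hvan : ∀ i j k : ℕ, 2*i+j+k = ℓ+1 →
      (j = 0 ∨ k = 0 ∨ j = 1 ∨ k = 1 ∨ ((j = 2 ∨ j = 3) ∧ (k = 2 ∨ k = 3))) →
      coeff (e3 i j k) (cmT η α β ξ) = 0) :
    η = 0 ∧ α = 0 ∧ β = 0 ∧ ξ = 0 := by
  have E : ∀ i j k : ℕ, 2*i+j+k = ℓ+1 →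
      (j = 0 ∨ k = 0 ∨ j = 1 ∨ k = 1 ∨ ((j = 2 ∨ j = 3) ∧ (k = 2 ∨ k = 3))) →
      (if j ≤ k then (((i+j).choose j : ℕ) : ℝ) * η.coeff (e2 (k-j) (i+j)) else 0)
      - (if k = 1 then β.coeff (e2 i j) else 0)
      - (if k = 0 then α.coeff (e2 i j) else 0)
      - (if 1 ≤ j ∧ j ≤ k + 1 then
          (((i+j-1).choose (j-1) : ℕ) : ℝ) * ξ.coeff (e2 (k+1-j) (i+j-1)) else 0) = 0 :=
    fun i j k hw hnn => by rw [← coeffT]; exact hvan i j k hw hnn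
  -- generic η equations (valid in both parities): k ≥ 2
  have hgen_eta : ∀ b a, a + 2*b = ℓ+1 → 2 ≤ a → η.coeff (e2 a b) = 0 := by
    intro b a hab ha
    have h := E b 0 a (by omega) (by tauto)
    rw [if_pos (by omega), if_neg (by omega), if_neg (by omega), if_neg (by omega)] at h
    simp only [Nat.add_zero, Nat.sub_zero, Nat.choose_zero_right, Nat.cast_one, one_mul] at h
    linarith [h]
  by_cases hpar : (ℓ+1) % 2 = 0
  · -- even case, ℓ = 2m+5
    obtain ⟨m, rfl⟩ : ∃ m, ℓ = 2*m+5 := ⟨(ℓ-5)/2, by omega⟩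
    have h22 := E (m+1) 2 2 (by omega) (by tauto)
    rw [if_pos (by omega), if_neg (by omega), if_neg (by omega), if_pos (by omega)] at h22
    simp only [show m+1+2 = m+3 from by omega, show (2:ℕ)-2 = 0 from rfl,
      show m+1+2-1 = m+2 from by omega, show (2:ℕ)-1 = 1 from rfl,
      show 2+1-2 = 1 from rfl, Nat.choose_one_right] at h22
    have h33 := E m 3 3 (by omega) (by tauto)
    rw [if_pos (by omega), if_neg (by omega), if_neg (by omega), if_pos (by omega)] at h33
    simp only [show (3:ℕ)-3 = 0 from rfl, show m+3-1 = m+2 from by omega,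
      show (3:ℕ)-1 = 2 from rfl, show 3+1-3 = 1 from rfl] at h33
    have hD : Dev (m+3) = ((m:ℝ)+2) * (((m+3).choose 3 : ℕ) : ℝ)
        - (((m+3).choose 2 : ℕ) : ℝ) * (((m+2).choose 2 : ℕ) : ℝ) := by
      rw [Dev, show m+3-1 = m+2 from by omega]; push_cast; ring
    have hne := Dev_ne (by omega : 3 ≤ m+3)
    have hX : η.coeff (e2 0 (m+3)) = 0 := by
      have hDX : Dev (m+3) * η.coeff (e2 0 (m+3)) = 0 := by
        rw [hD]
        linear_combination (norm := (push_cast; ring_nf)) ((m:ℝ)+2) * h33 - (((m+2).choose 2 : ℕ) : ℝ) * h22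
      exact (mul_eq_zero.mp hDX).resolve_left hne
    have hY : ξ.coeff (e2 1 (m+2)) = 0 := by
      have h : ((m:ℝ)+2) * ξ.coeff (e2 1 (m+2)) = 0 := by
        linear_combination (norm := (push_cast; ring_nf)) (((m+3).choose 2 : ℕ) : ℝ) * hX - h22
      exact (mul_eq_zero.mp h).resolve_left (by positivity)
    have hetaz : η = 0 := by
      apply MvPolynomial.ext; intro u
      rw [coeff_zero]
      obtain ⟨a, b, rfl⟩ : ∃ a b, u = e2 a b := ⟨u 0, u 1, e2_surj u⟩
      by_cases hwt : a + 2*b = 2*m+5+1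
      · by_cases hbM : b = m+3
        · rw [hbM, show a = 0 from by omega]; exact hX
        · exact hgen_eta b a (by omega) (by omega)
      · exact hη.coeff_eq_zero (e2 a b) (by rw [weight_e2XY]; omega)
    have hxiz : ξ = 0 := by
      apply MvPolynomial.ext; intro u
      rw [coeff_zero]
      obtain ⟨a, b, rfl⟩ : ∃ a b, u = e2 a b := ⟨u 0, u 1, e2_surj u⟩
      by_cases hwt : a + 2*b = 2*m+5
      · by_cases hbM : b = m+2
        · rw [hbM, show a = 1 from by omega]; exact hY
        · -- b ≤ m+1, a = ℓ-2b ≥ 3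
          have h := E b 1 a (by omega) (by tauto)
          rw [if_pos (by omega), if_neg (by omega), if_neg (by omega), if_pos (by omega)] at h
          simp only [show b+1-1 = b from by omega, show (1:ℕ)-1 = 0 from rfl,
            show a+1-1 = a from by omega, Nat.choose_zero_right, hetaz] at h
          simp only [coeff_zero, mul_zero, Nat.cast_one, one_mul] at h
          linarith [h]
      · exact hξ.coeff_eq_zero (e2 a b) (by rw [weight_e2XY]; omega)
    have halz : α = 0 := by
      apply MvPolynomial.ext; intro u
      rw [coeff_zero]
      obtain ⟨a, b, rfl⟩ : ∃ a b, u = e2 a b := ⟨u 0, u 1, e2_surj u⟩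
      by_cases hwt : 2*a + b = 2*m+5+1
      · by_cases haM : a = m+3
        · have h := E (m+3) 0 0 (by omega) (by tauto)
          rw [if_pos (by omega), if_neg (by omega), if_pos rfl, if_neg (by omega), hetaz] at h
          simp only [coeff_zero, mul_zero, Nat.add_zero] at h
          rw [haM, show b = 0 from by omega]
          linarith [h]
        · have h := E a b 0 (by omega) (by tauto)
          rw [if_neg (by omega), if_neg (by omega), if_pos rfl, if_neg (by omega)] at h
          linarith [h]
      · exact hα.coeff_eq_zero (e2 a b) (by rw [weight_e2AB]; omega)
    have hbez : β = 0 := by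
      apply MvPolynomial.ext; intro u
      rw [coeff_zero]
      obtain ⟨a, b, rfl⟩ : ∃ a b, u = e2 a b := ⟨u 0, u 1, e2_surj u⟩
      by_cases hwt : 2*a + b = 2*m+5
      · by_cases haM : a = m+2
        · have h := E (m+2) 1 1 (by omega) (by tauto)
          rw [if_pos (by omega), if_pos rfl, if_neg (by omega), if_pos (by omega), hetaz] at h
          simp only [show m+2+1-1 = m+2 from by omega, show (1:ℕ)-1 = 0 from rfl,
            show 1+1-1 = 1 from rfl, Nat.choose_zero_right, hY] at h
          simp only [coeff_zero, mul_zero, Nat.cast_one, one_mul] at h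
          rw [haM, show b = 1 from by omega]
          linarith [h]
        · have h := E a b 1 (by omega) (by tauto)
          rw [if_neg (by omega), if_pos rfl, if_neg (by omega), if_neg (by omega)] at h
          linarith [h]
      · exact hβ.coeff_eq_zero (e2 a b) (by rw [weight_e2AB]; omega)
    exact ⟨hetaz, halz, hbez, hxiz⟩
  · -- odd case, ℓ = 2m+6
    obtain ⟨m, rfl⟩ : ∃ m, ℓ = 2*m+6 := ⟨(ℓ-6)/2, by omega⟩
    have hY' : ξ.coeff (e2 0 (m+3)) = 0 := by
      have h := E (m+1) 3 2 (by omega) (by tauto)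
      rw [if_neg (by omega), if_neg (by omega), if_neg (by omega), if_pos (by omega)] at h
      simp only [show m+1+3-1 = m+3 from by omega, show (3:ℕ)-1 = 2 from rfl,
        show 2+1-3 = 0 from rfl] at h
      have hpos : (0:ℝ) < (((m+3).choose 2 : ℕ) : ℝ) := by
        exact_mod_cast Nat.choose_pos (by omega : 2 ≤ m+3)
      have h' : (((m+3).choose 2 : ℕ) : ℝ) * ξ.coeff (e2 0 (m+3)) = 0 := by linarith [h]
      exact (mul_eq_zero.mp h').resolve_left (by linarith)
    have h12 := E (m+2) 1 2 (by omega) (by tauto)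
    rw [if_pos (by omega), if_neg (by omega), if_neg (by omega), if_pos (by omega)] at h12
    simp only [show m+2+1 = m+3 from by omega, show (2:ℕ)-1 = 1 from rfl,
      show m+2+1-1 = m+2 from by omega, show (1:ℕ)-1 = 0 from rfl,
      show 2+1-1 = 2 from rfl, Nat.choose_one_right, Nat.choose_zero_right] at h12
    have h23 := E (m+1) 2 3 (by omega) (by tauto)
    rw [if_pos (by omega), if_neg (by omega), if_neg (by omega), if_pos (by omega)] at h23
    simp only [show m+1+2 = m+3 from by omega, show (3:ℕ)-2 = 1 from rfl,
      show m+1+2-1 = m+2 from by omega, show (2:ℕ)-1 = 1 from rfl,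
      show 3+1-2 = 2 from rfl, Nat.choose_one_right] at h23
    have hD : dOdd (m+3) = (((m+3).choose 2 : ℕ) : ℝ) - ((m:ℝ)+3)*((m:ℝ)+2) := by
      rw [dOdd]; push_cast; ring
    have hne := dOdd_ne (by omega : 2 ≤ m+3)
    have hX : η.coeff (e2 1 (m+3)) = 0 := by
      have hDX : dOdd (m+3) * η.coeff (e2 1 (m+3)) = 0 := by
        rw [hD]
        linear_combination (norm := (push_cast; ring_nf)) h23 - ((m:ℝ)+2) * h12
      exact (mul_eq_zero.mp hDX).resolve_left hne
    have hZ : ξ.coeff (e2 2 (m+2)) = 0 := by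
      have h := h12
      rw [hX] at h
      simp only [mul_zero, Nat.cast_one, one_mul] at h
      linarith [h]
    have hetaz : η = 0 := by
      apply MvPolynomial.ext; intro u
      rw [coeff_zero]
      obtain ⟨a, b, rfl⟩ : ∃ a b, u = e2 a b := ⟨u 0, u 1, e2_surj u⟩
      by_cases hwt : a + 2*b = 2*m+6+1
      · by_cases hbM : b = m+3
        · rw [hbM, show a = 1 from by omega]; exact hX
        · exact hgen_eta b a (by omega) (by omega)
      · exact hη.coeff_eq_zero (e2 a b) (by rw [weight_e2XY]; omega)
    have hxiz : ξ = 0 := by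
      apply MvPolynomial.ext; intro u
      rw [coeff_zero]
      obtain ⟨a, b, rfl⟩ : ∃ a b, u = e2 a b := ⟨u 0, u 1, e2_surj u⟩
      by_cases hwt : a + 2*b = 2*m+6
      · by_cases hbM : b = m+3
        · rw [hbM, show a = 0 from by omega]; exact hY'
        · by_cases hbM2 : b = m+2
          · rw [hbM2, show a = 2 from by omega]; exact hZ
          · have h := E b 1 a (by omega) (by tauto)
            rw [if_pos (by omega), if_neg (by omega), if_neg (by omega), if_pos (by omega)] at h
            simp only [show b+1-1 = b from by omega, show (1:ℕ)-1 = 0 from rfl,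
              show a+1-1 = a from by omega, Nat.choose_zero_right, hetaz] at h
            simp only [coeff_zero, mul_zero, Nat.cast_one, one_mul] at h
            linarith [h]
      · exact hξ.coeff_eq_zero (e2 a b) (by rw [weight_e2XY]; omega)
    have halz : α = 0 := by
      apply MvPolynomial.ext; intro u
      rw [coeff_zero]
      obtain ⟨a, b, rfl⟩ : ∃ a b, u = e2 a b := ⟨u 0, u 1, e2_surj u⟩
      by_cases hwt : 2*a + b = 2*m+6+1
      · by_cases haM : a = m+3
        · have h := E (m+3) 1 0 (by omega) (by tauto)
          rw [if_neg (by omega), if_neg (by omega), if_pos rfl, if_pos (by omega)] at h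
          simp only [show m+3+1-1 = m+3 from by omega, show (1:ℕ)-1 = 0 from rfl,
            show 0+1-1 = 0 from rfl, Nat.choose_zero_right, hY'] at h
          simp only [mul_zero, Nat.cast_one, one_mul] at h
          rw [haM, show b = 1 from by omega]
          linarith [h]
        · have h := E a b 0 (by omega) (by tauto)
          rw [if_neg (by omega), if_neg (by omega), if_pos rfl, if_neg (by omega)] at h
          linarith [h]
      · exact hα.coeff_eq_zero (e2 a b) (by rw [weight_e2AB]; omega)
    have hbez : β = 0 := by
      apply MvPolynomial.ext; intro u
      rw [coeff_zero]
      obtain ⟨a, b, rfl⟩ : ∃ a b, u = e2 a b := ⟨u 0, u 1, e2_surj u⟩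
      by_cases hwt : 2*a + b = 2*m+6
      · by_cases haM : a = m+3
        · have h := E (m+3) 0 1 (by omega) (by tauto)
          rw [if_pos (by omega), if_pos rfl, if_neg (by omega), if_neg (by omega), hetaz] at h
          simp only [coeff_zero, mul_zero, Nat.add_zero, Nat.sub_zero] at h
          rw [haM, show b = 0 from by omega]
          linarith [h]
        · by_cases haM2 : a = m+2
          · have h := E (m+2) 2 1 (by omega) (by tauto)
            rw [if_neg (by omega), if_pos rfl, if_neg (by omega), if_pos (by omega)] at h
            simp only [show m+2+2-1 = m+3 from by omega, show (2:ℕ)-1 = 1 from rfl,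
              show 1+1-2 = 0 from rfl, Nat.choose_one_right, hY'] at h
            simp only [mul_zero] at h
            rw [haM2, show b = 2 from by omega]
            linarith [h]
          · have h := E a b 1 (by omega) (by tauto)
            rw [if_neg (by omega), if_pos rfl, if_neg (by omega), if_neg (by omega)] at h
            linarith [h]
      · exact hβ.coeff_eq_zero (e2 a b) (by rw [weight_e2AB]; omega)
    exact ⟨hetaz, halz, hbez, hxiz⟩

lemma hom_sub {w : Fin 2 → ℕ} {n : ℕ} {f g : MvPolynomial (Fin 2) ℝ}
    (hf : f.IsWeightedHomogeneous w n) (hg : g.IsWeightedHomogeneous w n) :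
    (f - g).IsWeightedHomogeneous w n := by
  rw [← mem_weightedHomogeneousSubmodule] at hf hg ⊢
  exact Submodule.sub_mem _ hf hg

/-- Let `ℓ ≥ 2` and let `P` be weighted homogeneous of weight `ℓ+1` in `(a,b,x)`.
Then there are `ξ(x,y)`, `β(a,b)` weighted homogeneous of weight `ℓ` and
`η(x,y)`, `α(a,b)` weighted homogeneous of weight `ℓ+1` such that
`P* = P + η(x,a+bx) − α(a,b) − x·β(a,b) − b·ξ(x,a+bx)` contains no non-normal
monomial; if `ℓ > 4` the quadruple `(η, α, β, ξ)` is unique. -/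
theorem stmt3 (ℓ : ℕ) (hℓ : 2 ≤ ℓ) (P : MvPolynomial (Fin 3) ℝ)
    (hP : P.IsWeightedHomogeneous wABX (ℓ + 1)) :
    (∃ η α β ξ : MvPolynomial (Fin 2) ℝ,
      η.IsWeightedHomogeneous wXY (ℓ + 1) ∧ α.IsWeightedHomogeneous wAB (ℓ + 1) ∧
      β.IsWeightedHomogeneous wAB ℓ ∧ ξ.IsWeightedHomogeneous wXY ℓ ∧
      ∀ d ∈ (P + cmT η α β ξ).support, ¬ NonNormal d) ∧
    (4 < ℓ →
      ∀ η α β ξ η' α' β' ξ' : MvPolynomial (Fin 2) ℝ,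
        η.IsWeightedHomogeneous wXY (ℓ + 1) → α.IsWeightedHomogeneous wAB (ℓ + 1) →
        β.IsWeightedHomogeneous wAB ℓ → ξ.IsWeightedHomogeneous wXY ℓ →
        (∀ d ∈ (P + cmT η α β ξ).support, ¬ NonNormal d) →
        η'.IsWeightedHomogeneous wXY (ℓ + 1) → α'.IsWeightedHomogeneous wAB (ℓ + 1) →
        β'.IsWeightedHomogeneous wAB ℓ → ξ'.IsWeightedHomogeneous wXY ℓ →
        (∀ d ∈ (P + cmT η' α' β' ξ').support, ¬ NonNormal d) →
        η = η' ∧ α = α' ∧ β = β' ∧ ξ = ξ') := by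
  constructor
  · exact existence ℓ hℓ P hP
  · intro hl5 η α β ξ η' α' β' ξ' hη hα hβ hξ hsup hη' hα' hβ' hξ' hsup'
    have hsub : cmT η α β ξ - cmT η' α' β' ξ' = cmT (η - η') (α - α') (β - β') (ξ - ξ') := by
      simp only [cmT, map_sub]
      ring
    have hvan : ∀ i j k : ℕ, 2*i+j+k = ℓ+1 →
        (j = 0 ∨ k = 0 ∨ j = 1 ∨ k = 1 ∨ ((j = 2 ∨ j = 3) ∧ (k = 2 ∨ k = 3))) →
        coeff (e3 i j k) (cmT (η - η') (α - α') (β - β') (ξ - ξ')) = 0 := by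
      intro i j k _hw hnn
      have hNN : NonNormal (e3 i j k) := by
        unfold NonNormal
        simp only [e3_apply1, e3_apply2]
        exact hnn
      have c1 : coeff (e3 i j k) (P + cmT η α β ξ) = 0 := by
        by_contra hc
        exact hsup _ (mem_support_iff.mpr hc) hNN
      have c2 : coeff (e3 i j k) (P + cmT η' α' β' ξ') = 0 := by
        by_contra hc
        exact hsup' _ (mem_support_iff.mpr hc) hNN
      rw [coeff_add] at c1 c2
      rw [← hsub, coeff_sub]
      linarith
    obtain ⟨h1, h2, h3, h4⟩ := vanish ℓ hl5 (hom_sub hη hη') (hom_sub hα hα')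
      (hom_sub hβ hβ') (hom_sub hξ hξ') hvan
    exact ⟨sub_eq_zero.mp h1, sub_eq_zero.mp h2, sub_eq_zero.mp h3, sub_eq_zero.mp h4⟩
end

section
/- Let r, s: I → ℝ be continuous on an open interval I containing 0, and let f₁, f₂: I → ℝ be the solutions of u'' + r u' + s u = 0 with f₁(0) = f₂'(0) = 1 and f₁'(0) = f₂(0) = 0. Let J ⊆ I be an open subinterval containing 0 on which f₁ does not vanish, and set x̃ = f₂/f₁ on J. Then: (1) the Wronskian W = f₂' f₁ − f₂ f₁' never vanishes on I, and x̃' = W/f₁² never vanishes on J, so x̃ is a C¹ diffeomorphism of J onto an open interval; (2) for all a,b ∈ ℝ, the solution y = a f₁ + b f₂ satisfies y/f₁ = a + b·x̃ on J; (3) a twice differentiable function u: J → ℝ satisfies u'' + r u' + s u = 0 on J if and only if the function ũ := (u/f₁) ∘ x̃⁻¹ has vanishing second derivative on x̃(J). -/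
/- Normalization of a homogeneous linear second order ODE
   y'' + r(x) y' + s(x) y = 0 by the point transformation
   ỹ = y/f₁, x̃ = f₂/f₁. -/

open Set

theorem stmt12 (r s : ℝ → ℝ) (I J : Set ℝ)
    (hIopen : IsOpen I) (hIconn : IsPreconnected I) (hI0 : (0 : ℝ) ∈ I)
    (hr : ContinuousOn r I) (hs : ContinuousOn s I)
    (f₁ f₂ : ℝ → ℝ)
    (hf₁diff : ∀ t ∈ I, DifferentiableAt ℝ f₁ t ∧ DifferentiableAt ℝ (deriv f₁) t)
    (hf₂diff : ∀ t ∈ I, DifferentiableAt ℝ f₂ t ∧ DifferentiableAt ℝ (deriv f₂) t)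
    (hf₁ode : ∀ t ∈ I, deriv (deriv f₁) t + r t * deriv f₁ t + s t * f₁ t = 0)
    (hf₂ode : ∀ t ∈ I, deriv (deriv f₂) t + r t * deriv f₂ t + s t * f₂ t = 0)
    (hf₁0 : f₁ 0 = 1) (hf₁'0 : deriv f₁ 0 = 0)
    (hf₂0 : f₂ 0 = 0) (hf₂'0 : deriv f₂ 0 = 1)
    (hJopen : IsOpen J) (hJconn : IsPreconnected J) (hJ0 : (0 : ℝ) ∈ J)
    (hJI : J ⊆ I) (hf₁ne : ∀ t ∈ J, f₁ t ≠ 0) :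
    (let xt : ℝ → ℝ := fun t => f₂ t / f₁ t
    -- (1) the Wronskian never vanishes on I, x̃' = W/f₁² ≠ 0 on J, and x̃ is a
    --     C¹ diffeomorphism of J onto an open interval
    (∀ t ∈ I, deriv f₂ t * f₁ t - f₂ t * deriv f₁ t ≠ 0) ∧
    (∀ t ∈ J,
      deriv xt t = (deriv f₂ t * f₁ t - f₂ t * deriv f₁ t) / (f₁ t) ^ 2 ∧
      deriv xt t ≠ 0) ∧
    ContDiffOn ℝ 1 xt J ∧ InjOn xt J ∧ IsOpen (xt '' J) ∧
    IsPreconnected (xt '' J) ∧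
    (∃ g : ℝ → ℝ, (∀ t ∈ J, g (xt t) = t) ∧ ContDiffOn ℝ 1 g (xt '' J)) ∧
    -- (2) the solution y = a f₁ + b f₂ satisfies y/f₁ = a + b·x̃ on J
    (∀ a b : ℝ, ∀ t ∈ J, (a * f₁ t + b * f₂ t) / f₁ t = a + b * xt t) ∧
    -- (3) u solves the ODE on J iff ũ = (u/f₁) ∘ x̃⁻¹ has vanishing second
    --     derivative on x̃(J)
    (∀ u : ℝ → ℝ,
      (∀ t ∈ J, DifferentiableAt ℝ u t ∧ DifferentiableAt ℝ (deriv u) t) →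
      ((∀ t ∈ J, deriv (deriv u) t + r t * deriv u t + s t * u t = 0) ↔
        ∀ g : ℝ → ℝ, (∀ t ∈ J, g (xt t) = t) →
          ∀ z ∈ xt '' J,
            deriv (deriv (fun w => u (g w) / f₁ (g w))) z = 0))) := by
  intro xt
  have hxt : xt = fun t => f₂ t / f₁ t := rfl
  have hIconv : Convex ℝ I := hIconn.ordConnected.convex
  have hJconv : Convex ℝ J := hJconn.ordConnected.convex
  set W : ℝ → ℝ := fun t => deriv f₂ t * f₁ t - f₂ t * deriv f₁ t with hWdef
  have hf₁c : ContinuousOn f₁ I := fun t ht => ((hf₁diff t ht).1.continuousAt).continuousWithinAt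
  have hf₂c : ContinuousOn f₂ I := fun t ht => ((hf₂diff t ht).1.continuousAt).continuousWithinAt
  have hf₁'c : ContinuousOn (deriv f₁) I :=
    fun t ht => ((hf₁diff t ht).2.continuousAt).continuousWithinAt
  have hf₂'c : ContinuousOn (deriv f₂) I :=
    fun t ht => ((hf₂diff t ht).2.continuousAt).continuousWithinAt
  have hWc : ContinuousOn W I := (hf₂'c.mul hf₁c).sub (hf₂c.mul hf₁'c)
  -- derivative of the Wronskian
  have hWderiv : ∀ t ∈ I, HasDerivAt W (-(r t) * W t) t := by
    intro t ht
    have h1 := ((hf₂diff t ht).2.hasDerivAt.mul (hf₁diff t ht).1.hasDerivAt).sub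
      ((hf₂diff t ht).1.hasDerivAt.mul (hf₁diff t ht).2.hasDerivAt)
    refine h1.congr_deriv (Eq.symm ?_)
    have e1 := hf₁ode t ht
    have e2 := hf₂ode t ht
    simp only [hWdef]
    linear_combination f₂ t * e1 - f₁ t * e2
  -- antiderivative of r
  set R : ℝ → ℝ := fun x => ∫ y in (0:ℝ)..x, r y with hRdef
  have hRderiv : ∀ t ∈ I, HasDerivAt R (r t) t := by
    intro t ht
    have hsub : uIcc (0:ℝ) t ⊆ I := hIconv.ordConnected.uIcc_subset hI0 ht
    exact intervalIntegral.integral_hasDerivAt_right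
      ((hr.mono hsub).intervalIntegrable)
      (ContinuousOn.stronglyMeasurableAtFilter hIopen hr t ht)
      (hr.continuousAt (hIopen.mem_nhds ht))
  -- the function W * exp R is constant on I
  have hG : ∀ t ∈ I, HasDerivAt (fun x => W x * Real.exp (R x)) 0 t := by
    intro t ht
    have := (hWderiv t ht).mul ((hRderiv t ht).exp)
    refine this.congr_deriv (Eq.symm ?_)
    ring
  have hGconst : ∀ t ∈ I, W t * Real.exp (R t) = W 0 * Real.exp (R 0) := by
    intro t ht
    refine hIconv.is_const_of_fderivWithin_eq_zero
      (f := fun x => W x * Real.exp (R x)) (fun x hx => ((hG x hx).differentiableAt).differentiableWithinAt) ?_ ht hI0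
    intro x hx
    rw [fderivWithin_of_isOpen hIopen hx, (hG x hx).hasFDerivAt.fderiv]
    ext
    simp
  have hW0 : W 0 = 1 := by simp [hWdef, hf₁0, hf₂0, hf₁'0, hf₂'0]
  have hWne : ∀ t ∈ I, W t ≠ 0 := by
    intro t ht h0
    have := hGconst t ht
    rw [h0, hW0] at this
    simp at this
    exact (Real.exp_pos (R 0)).ne' this.symm
  have hWpos : ∀ t ∈ I, 0 < W t := by
    intro t ht
    by_contra h
    push_neg at h
    have h0 : W t < 0 := lt_of_le_of_ne h (hWne t ht)
    obtain ⟨c, hc, hc0⟩ := hIconn.intermediate_value ht hI0 hWc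
      (mem_Icc.2 ⟨le_of_lt h0, by rw [hW0]; norm_num⟩)
    exact hWne c hc hc0
  -- derivative of xt
  have hxtderiv : ∀ t ∈ J, HasDerivAt xt (W t / f₁ t ^ 2) t := fun t ht =>
    (hf₂diff t (hJI ht)).1.hasDerivAt.div (hf₁diff t (hJI ht)).1.hasDerivAt (hf₁ne t ht)
  have hxt'eq : ∀ t ∈ J, deriv xt t = W t / f₁ t ^ 2 := fun t ht => (hxtderiv t ht).deriv
  have hxt'pos : ∀ t ∈ J, 0 < deriv xt t := by
    intro t ht
    rw [hxt'eq t ht]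
    exact div_pos (hWpos t (hJI ht)) (pow_two_pos_of_ne_zero (hf₁ne t ht))
  have hxtcont : ContinuousOn xt J := (hf₂c.mono hJI).div (hf₁c.mono hJI) hf₁ne
  have hxt'cont : ContinuousOn (deriv xt) J := by
    refine ContinuousOn.congr ?_ hxt'eq
    exact (hWc.mono hJI).div ((hf₁c.mono hJI).pow 2) (fun t ht => pow_ne_zero 2 (hf₁ne t ht))
  have hC1aux : ∀ (f : ℝ → ℝ) (s : Set ℝ), IsOpen s → DifferentiableOn ℝ f s →
      ContinuousOn (deriv f) s → ContDiffOn ℝ 1 f s := by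
    intro f sJ hsopen h1 h2
    rw [← zero_add (1 : WithTop ℕ∞), contDiffOn_succ_iff_deriv_of_isOpen hsopen]
    exact ⟨h1, by simp, contDiffOn_zero.2 h2⟩
  have hC1 : ContDiffOn ℝ 1 xt J :=
    hC1aux xt J hJopen (fun t ht => (hxtderiv t ht).differentiableAt.differentiableWithinAt)
      hxt'cont
  have hmono : StrictMonoOn xt J := by
    refine strictMonoOn_of_deriv_pos hJconv hxtcont ?_
    intro x hx
    rw [hJopen.interior_eq] at hx
    exact hxt'pos x hx
  have hinj : InjOn xt J := hmono.injOn
  have hstrictAt : ∀ t ∈ J, HasStrictDerivAt xt (deriv xt t) t := fun t ht =>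
    (hC1.contDiffAt (hJopen.mem_nhds ht)).hasStrictDerivAt one_ne_zero
  have hopen : IsOpen (xt '' J) := by
    rw [isOpen_iff_mem_nhds]
    rintro z ⟨t, ht, rfl⟩
    rw [← (hstrictAt t ht).map_nhds_eq (hxt'pos t ht).ne']
    exact Filter.image_mem_map (hJopen.mem_nhds ht)
  have hpre : IsPreconnected (xt '' J) := hJconn.image xt hxtcont
  -- inverse map
  set g₀ : ℝ → ℝ := Function.invFunOn xt J with hg₀def
  have hgleft : ∀ t ∈ J, g₀ (xt t) = t := fun t ht => hinj.leftInvOn_invFunOn ht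
  have hgright : ∀ z ∈ xt '' J, xt (g₀ z) = z := by
    rintro z ⟨t, ht, rfl⟩
    exact Function.invFunOn_eq ⟨t, ht, rfl⟩
  have hgmem : ∀ z ∈ xt '' J, g₀ z ∈ J := by
    rintro z ⟨t, ht, rfl⟩
    exact Function.invFunOn_mem ⟨t, ht, rfl⟩
  have hgcont : ∀ z ∈ xt '' J, ContinuousAt g₀ z := by
    rintro z ⟨t, ht, rfl⟩
    rw [ContinuousAt, hgleft t ht, ← (hstrictAt t ht).map_nhds_eq (hxt'pos t ht).ne',
      Filter.tendsto_map'_iff]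
    refine Filter.Tendsto.congr' ?_ Filter.tendsto_id
    filter_upwards [hJopen.mem_nhds ht] with a ha using (hgleft a ha).symm
  have hgderiv : ∀ z ∈ xt '' J, HasDerivAt g₀ (W (g₀ z) / f₁ (g₀ z) ^ 2)⁻¹ z := by
    intro z hz
    refine HasDerivAt.of_local_left_inverse (hgcont z hz) (hxtderiv _ (hgmem z hz)) ?_ ?_
    · exact (div_pos (hWpos _ (hJI (hgmem z hz))) (pow_two_pos_of_ne_zero (hf₁ne _ (hgmem z hz)))).ne'
    · filter_upwards [hopen.mem_nhds hz] with y hy using hgright y hy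
  have hx1ne : ∀ t ∈ J, W t / f₁ t ^ 2 ≠ 0 := fun t ht =>
    (div_pos (hWpos t (hJI ht)) (pow_two_pos_of_ne_zero (hf₁ne t ht))).ne'
  have hgC1 : ContDiffOn ℝ 1 g₀ (xt '' J) := by
    refine hC1aux g₀ (xt '' J) hopen
      (fun z hz => (hgderiv z hz).differentiableAt.differentiableWithinAt) ?_
    have : ContinuousOn (fun z => (W (g₀ z) / f₁ (g₀ z) ^ 2)⁻¹) (xt '' J) := by
      refine ContinuousOn.inv₀ ?_ (fun z hz => hx1ne _ (hgmem z hz))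
      have hgcOn : ContinuousOn g₀ (xt '' J) := fun z hz => (hgcont z hz).continuousWithinAt
      exact ContinuousOn.comp ((hWc.mono hJI).div ((hf₁c.mono hJI).pow 2)
        (fun t ht => pow_ne_zero 2 (hf₁ne t ht))) hgcOn hgmem
    exact ContinuousOn.congr this (fun z hz => (hgderiv z hz).deriv)
  refine ⟨fun t ht => (hWpos t ht).ne', fun t ht => ⟨hxt'eq t ht, (hxt'pos t ht).ne'⟩,
    hC1, hinj, hopen, hpre, ⟨g₀, hgleft, hgC1⟩, ?_, ?_⟩
  · intro a b t ht
    have h := hf₁ne t ht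
    rw [hxt]
    field_simp
  · -- part (3)
    intro u hu
    set v : ℝ → ℝ := fun t => u t / f₁ t with hvdef
    set v1 : ℝ → ℝ := fun t => (deriv u t * f₁ t - u t * deriv f₁ t) / f₁ t ^ 2 with hv1def
    have hv : ∀ t ∈ J, HasDerivAt v (v1 t) t := fun t ht =>
      (hu t ht).1.hasDerivAt.div (hf₁diff t (hJI ht)).1.hasDerivAt (hf₁ne t ht)
    set v2 : ℝ → ℝ := fun t =>
      ((deriv (deriv u) t * f₁ t - u t * deriv (deriv f₁) t) * f₁ t ^ 2 -
        (deriv u t * f₁ t - u t * deriv f₁ t) * (2 * f₁ t * deriv f₁ t)) / f₁ t ^ 4 with hv2def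
    have hv1 : ∀ t ∈ J, HasDerivAt v1 (v2 t) t := by
      intro t ht
      have hN : HasDerivAt (fun t => deriv u t * f₁ t - u t * deriv f₁ t)
          (deriv (deriv u) t * f₁ t + deriv u t * deriv f₁ t -
            (deriv u t * deriv f₁ t + u t * deriv (deriv f₁) t)) t :=
        ((hu t ht).2.hasDerivAt.mul (hf₁diff t (hJI ht)).1.hasDerivAt).sub
          ((hu t ht).1.hasDerivAt.mul (hf₁diff t (hJI ht)).2.hasDerivAt)
      have hD : HasDerivAt (fun t => f₁ t ^ 2) ((2:ℕ) * f₁ t ^ (2-1) * deriv f₁ t) t :=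
        (hf₁diff t (hJI ht)).1.hasDerivAt.pow 2
      have := hN.div hD (pow_ne_zero 2 (hf₁ne t ht))
      refine this.congr_deriv (Eq.symm ?_)
      have h := hf₁ne t ht
      simp only [hv2def]
      field_simp
      ring
    set x1 : ℝ → ℝ := fun t => W t / f₁ t ^ 2 with hx1def
    set x2 : ℝ → ℝ := fun t =>
      (-(r t) * W t * f₁ t ^ 2 - W t * (2 * f₁ t * deriv f₁ t)) / f₁ t ^ 4 with hx2def
    have hx1d : ∀ t ∈ J, HasDerivAt x1 (x2 t) t := by
      intro t ht
      have hD : HasDerivAt (fun t => f₁ t ^ 2) ((2:ℕ) * f₁ t ^ (2-1) * deriv f₁ t) t :=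
        (hf₁diff t (hJI ht)).1.hasDerivAt.pow 2
      have := (hWderiv t (hJI ht)).div hD (pow_ne_zero 2 (hf₁ne t ht))
      refine this.congr_deriv (Eq.symm ?_)
      have h := hf₁ne t ht
      simp only [hx2def]
      push_cast
      rw [div_eq_div_iff (pow_ne_zero 4 h) (pow_ne_zero 2 (pow_ne_zero 2 h))]
      ring
    -- derivative of v ∘ g₀ on the image
    have hF1 : ∀ z ∈ xt '' J, HasDerivAt (fun w => u (g₀ w) / f₁ (g₀ w))
        (v1 (g₀ z) * (x1 (g₀ z))⁻¹) z := by
      intro z hz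
      exact (hv _ (hgmem z hz)).comp z (hgderiv z hz)
    set Φ : ℝ → ℝ := fun z => v1 (g₀ z) * (x1 (g₀ z))⁻¹ with hΦdef
    have hΦd : ∀ z ∈ xt '' J, HasDerivAt Φ
        (v2 (g₀ z) * (x1 (g₀ z))⁻¹ * (x1 (g₀ z))⁻¹ +
          v1 (g₀ z) * (-(x2 (g₀ z) * (x1 (g₀ z))⁻¹) / x1 (g₀ z) ^ 2)) z := by
      intro z hz
      have h1 : HasDerivAt (fun w => v1 (g₀ w)) (v2 (g₀ z) * (x1 (g₀ z))⁻¹) z :=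
        (hv1 _ (hgmem z hz)).comp z (hgderiv z hz)
      have h2 : HasDerivAt (fun w => x1 (g₀ w)) (x2 (g₀ z) * (x1 (g₀ z))⁻¹) z :=
        (hx1d _ (hgmem z hz)).comp z (hgderiv z hz)
      exact h1.mul (h2.inv (hx1ne _ (hgmem z hz)))
    -- the main formula for the second derivative
    have hmain : ∀ z ∈ xt '' J,
        deriv (deriv (fun w => u (g₀ w) / f₁ (g₀ w))) z =
          (deriv (deriv u) (g₀ z) + r (g₀ z) * deriv u (g₀ z) + s (g₀ z) * u (g₀ z)) *
            f₁ (g₀ z) ^ 3 / W (g₀ z) ^ 2 := by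
      intro z hz
      have hstep1 : deriv (fun w => u (g₀ w) / f₁ (g₀ w)) =ᶠ[nhds z] Φ := by
        filter_upwards [hopen.mem_nhds hz] with w hw using (hF1 w hw).deriv
      rw [hstep1.deriv_eq, (hΦd z hz).deriv]
      set t := g₀ z with htdef
      have ht : t ∈ J := hgmem z hz
      have hA : f₁ t ≠ 0 := hf₁ne t ht
      have hWt : W t ≠ 0 := hWne t (hJI ht)
      have hA2 : deriv (deriv f₁) t = -(r t * deriv f₁ t + s t * f₁ t) := by
        have := hf₁ode t (hJI ht)
        linarith
      simp only [hv1def, hv2def, hx1def, hx2def, hA2]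
      field_simp
      ring
    constructor
    · intro hode g' hg' z hz
      have hgeq : ∀ w ∈ xt '' J, g' w = g₀ w := by
        rintro w ⟨t, ht, rfl⟩
        rw [hg' t ht, hgleft t ht]
      have hFeq : ∀ w ∈ xt '' J,
          (fun w => u (g' w) / f₁ (g' w)) w = (fun w => u (g₀ w) / f₁ (g₀ w)) w := by
        intro w hw
        simp only [hgeq w hw]
      have hd1 : ∀ w ∈ xt '' J, deriv (fun w => u (g' w) / f₁ (g' w)) w =
          deriv (fun w => u (g₀ w) / f₁ (g₀ w)) w := by
        intro w hw
        refine Filter.EventuallyEq.deriv_eq ?_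
        filter_upwards [hopen.mem_nhds hw] with a ha using hFeq a ha
      have hd2 : deriv (deriv (fun w => u (g' w) / f₁ (g' w))) z =
          deriv (deriv (fun w => u (g₀ w) / f₁ (g₀ w))) z := by
        refine Filter.EventuallyEq.deriv_eq ?_
        filter_upwards [hopen.mem_nhds hz] with a ha using hd1 a ha
      rw [hd2, hmain z hz, hode _ (hgmem z hz)]
      simp
    · intro hall t ht
      have h := hall g₀ hgleft (xt t) ⟨t, ht, rfl⟩
      rw [hmain _ ⟨t, ht, rfl⟩, hgleft t ht] at h
      have hA : f₁ t ≠ 0 := hf₁ne t ht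
      have hWt : W t ≠ 0 := hWne t (hJI ht)
      have h3 : f₁ t ^ 3 ≠ 0 := pow_ne_zero _ hA
      have h2 : W t ^ 2 ≠ 0 := pow_ne_zero _ hWt
      have h4 := (div_eq_zero_iff.mp h).resolve_right h2
      exact (mul_eq_zero.mp h4).resolve_right h3
end

section
/- Let λ ≠ μ be real numbers and let I be an open interval containing 0 on which μe^{λx} − λe^{μx} ≠ 0. For a twice differentiable function y: I → ℝ, define on I: x̃(x) = (e^{μx} − e^{λx})/(μe^{λx} − λe^{μx}), ỹ(x) = (μ−λ) y(x)/(μe^{λx} − λe^{μx}), and g(x) = (λe^{μx}(y'(x) − μ y(x)) − μe^{λx}(y'(x) − λ y(x)))/((λ−μ) e^{(λ+μ)x}). Then for every x ∈ I: ỹ'(x) = g(x)·x̃'(x), and g'(x) = [((λe^{μx} − μe^{λx})³/((λ−μ)³ e^{2(λ+μ)x}))·(y''(x) − (λ+μ) y'(x) + λμ y(x))]·x̃'(x). In particular, where x̃' ≠ 0, the second derivative of ỹ with respect to x̃ equals ((λe^{μx} − μe^{λx})³/((λ−μ)³ e^{2(λ+μ)x}))·(y'' − (λ+μ)y' + λμ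 y), so y solves y'' − (λ+μ)y' + λμ y = 0 if and only if ỹ, as a function of x̃, solves ỹ'' = 0. -/
open Real

private lemma expDeriv (c x : ℝ) :
    HasDerivAt (fun t => Real.exp (c * t)) (c * Real.exp (c * x)) x := by
  exact (((hasDerivAt_id' x).const_mul c).exp).congr_deriv (by ring)

theorem stmt13 (lam mu : ℝ) (hne : lam ≠ mu) (I : Set ℝ)
    (hIopen : IsOpen I) (hIconn : IsPreconnected I) (hI0 : (0 : ℝ) ∈ I)
    (hden : ∀ x ∈ I, mu * exp (lam * x) - lam * exp (mu * x) ≠ 0)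
    (y : ℝ → ℝ)
    (hy : ∀ x ∈ I, DifferentiableAt ℝ y x ∧ DifferentiableAt ℝ (deriv y) x) :
    (let xt : ℝ → ℝ := fun x =>
      (exp (mu * x) - exp (lam * x)) / (mu * exp (lam * x) - lam * exp (mu * x))
    let yt : ℝ → ℝ := fun x =>
      (mu - lam) * y x / (mu * exp (lam * x) - lam * exp (mu * x))
    let g : ℝ → ℝ := fun x =>
      (lam * exp (mu * x) * (deriv y x - mu * y x) -
        mu * exp (lam * x) * (deriv y x - lam * y x)) /
        ((lam - mu) * exp ((lam + mu) * x))
    let H : ℝ → ℝ := fun x =>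
      (lam * exp (mu * x) - mu * exp (lam * x)) ^ 3 /
        ((lam - mu) ^ 3 * exp (2 * (lam + mu) * x))
    let L : ℝ → ℝ := fun x =>
      deriv (deriv y) x - (lam + mu) * deriv y x + lam * mu * y x
    -- ỹ' = g·x̃'
    (∀ x ∈ I, deriv yt x = g x * deriv xt x) ∧
    -- g' = (H·(y'' − (λ+μ)y' + λμ y))·x̃'
    (∀ x ∈ I, deriv g x = H x * L x * deriv xt x) ∧
    -- where x̃' ≠ 0 the second derivative of ỹ with respect to x̃ equals
    -- H·(y'' − (λ+μ)y' + λμ y); in particular y solves the ODE iff ỹ'' = 0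
    (∀ x ∈ I, deriv xt x ≠ 0 →
      deriv (fun t => deriv yt t / deriv xt t) x / deriv xt x = H x * L x ∧
      (L x = 0 ↔
        deriv (fun t => deriv yt t / deriv xt t) x / deriv xt x = 0))) := by
  intro xt yt g H L
  have hlm : lam - mu ≠ 0 := sub_ne_zero.2 hne
  -- derivative of xt
  have hxt : ∀ x ∈ I, deriv xt x =
      (lam - mu) ^ 2 * (exp (lam * x) * exp (mu * x)) /
        (mu * exp (lam * x) - lam * exp (mu * x)) ^ 2 := by
    intro x hx
    have hDx := hden x hx
    have h : HasDerivAt xt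
        (((mu * exp (mu * x) - lam * exp (lam * x)) *
            (mu * exp (lam * x) - lam * exp (mu * x)) -
          (exp (mu * x) - exp (lam * x)) *
            (mu * (lam * exp (lam * x)) - lam * (mu * exp (mu * x)))) /
          (mu * exp (lam * x) - lam * exp (mu * x)) ^ 2) x :=
      ((expDeriv mu x).sub (expDeriv lam x)).div
        (((expDeriv lam x).const_mul mu).sub ((expDeriv mu x).const_mul lam)) hDx
    rw [h.deriv]
    field_simp
    ring
  have hxtne : ∀ x ∈ I, deriv xt x ≠ 0 := by
    intro x hx
    rw [hxt x hx]
    exact div_ne_zero (mul_ne_zero (pow_ne_zero _ hlm)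
      (mul_ne_zero (Real.exp_ne_zero _) (Real.exp_ne_zero _)))
      (pow_ne_zero _ (hden x hx))
  -- derivative of yt
  have hyt : ∀ x ∈ I, deriv yt x =
      ((mu - lam) * deriv y x * (mu * exp (lam * x) - lam * exp (mu * x)) -
        (mu - lam) * y x *
          (mu * (lam * exp (lam * x)) - lam * (mu * exp (mu * x)))) /
        (mu * exp (lam * x) - lam * exp (mu * x)) ^ 2 := by
    intro x hx
    have hDx := hden x hx
    have h : HasDerivAt yt _ x :=
      (((hy x hx).1.hasDerivAt.const_mul (mu - lam)).div
        (((expDeriv lam x).const_mul mu).sub ((expDeriv mu x).const_mul lam)) hDx)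
    rw [h.deriv]
  -- part 1
  have part1 : ∀ x ∈ I, deriv yt x = g x * deriv xt x := by
    intro x hx
    have hDx := hden x hx
    have e1 : exp ((lam + mu) * x) = exp (lam * x) * exp (mu * x) := by
      rw [← Real.exp_add]; ring_nf
    rw [hyt x hx, hxt x hx]
    show _ = (lam * exp (mu * x) * (deriv y x - mu * y x) -
        mu * exp (lam * x) * (deriv y x - lam * y x)) /
        ((lam - mu) * exp ((lam + mu) * x)) * _
    rw [e1]
    have hA := Real.exp_ne_zero (lam * x)
    have hB := Real.exp_ne_zero (mu * x)
    field_simp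
    ring
  -- part 2
  have part2 : ∀ x ∈ I, deriv g x = H x * L x * deriv xt x := by
    intro x hx
    have hDx := hden x hx
    have hy' : HasDerivAt y (deriv y x) x := (hy x hx).1.hasDerivAt
    have hy'' : HasDerivAt (deriv y) (deriv (deriv y) x) x := (hy x hx).2.hasDerivAt
    have hdenne : (lam - mu) * exp ((lam + mu) * x) ≠ 0 :=
      mul_ne_zero hlm (Real.exp_ne_zero _)
    have hnum : HasDerivAt (fun t => lam * exp (mu * t) * (deriv y t - mu * y t) -
        mu * exp (lam * t) * (deriv y t - lam * y t)) _ x :=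
      ((((expDeriv mu x).const_mul lam).mul (hy''.sub (hy'.const_mul mu))).sub
        (((expDeriv lam x).const_mul mu).mul (hy''.sub (hy'.const_mul lam))))
    have hg : HasDerivAt g _ x :=
      hnum.div ((expDeriv (lam + mu) x).const_mul (lam - mu)) hdenne
    rw [hg.deriv, hxt x hx]
    show _ = (lam * exp (mu * x) - mu * exp (lam * x)) ^ 3 /
        ((lam - mu) ^ 3 * exp (2 * (lam + mu) * x)) *
      (deriv (deriv y) x - (lam + mu) * deriv y x + lam * mu * y x) * _
    have e1 : exp ((lam + mu) * x) = exp (lam * x) * exp (mu * x) := by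
      rw [← Real.exp_add]; ring_nf
    have e2 : exp (2 * (lam + mu) * x) = (exp (lam * x) * exp (mu * x)) ^ 2 := by
      rw [show 2 * (lam + mu) * x = (lam * x + mu * x) + (lam * x + mu * x) by ring,
        Real.exp_add, Real.exp_add]
      ring
    rw [e1, e2]
    have hA := Real.exp_ne_zero (lam * x)
    have hB := Real.exp_ne_zero (mu * x)
    simp only [Pi.sub_apply]
    field_simp
    ring
  refine ⟨part1, part2, ?_⟩
  intro x hx hxne
  have heq : deriv (fun t => deriv yt t / deriv xt t) x = deriv g x := by
    apply Filter.EventuallyEq.deriv_eq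
    filter_upwards [hIopen.mem_nhds hx] with t ht
    rw [part1 t ht, mul_div_cancel_right₀ _ (hxtne t ht)]
  have h2 : deriv (fun t => deriv yt t / deriv xt t) x / deriv xt x = H x * L x := by
    rw [heq, part2 x hx, mul_div_cancel_right₀ _ hxne]
  refine ⟨h2, ?_⟩
  rw [h2]
  have hHne : H x ≠ 0 := by
    show (lam * exp (mu * x) - mu * exp (lam * x)) ^ 3 /
        ((lam - mu) ^ 3 * exp (2 * (lam + mu) * x)) ≠ 0
    have h3 : lam * exp (mu * x) - mu * exp (lam * x) ≠ 0 := by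
      intro h
      apply hden x hx
      linarith
    exact div_ne_zero (pow_ne_zero _ h3)
      (mul_ne_zero (pow_ne_zero _ hlm) (Real.exp_ne_zero _))
  constructor
  · intro h; rw [h, mul_zero]
  · intro h
    rcases mul_eq_zero.1 h with h' | h'
    · exact absurd h' hHne
    · exact h'
end
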